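/- arXiv:1209.4889 — 2 statements merged into one kernel-verified Lean document; each statement's English description precedes it below -/
import Mathlib

section
/- For each k ∈ {2, …, M+2}, among all subsets of N∖M that are self-decodable at node π(k) there is a unique largest one: there exists a subset D_k ⊆ N∖M that is self-decodable at node π(k) and contains every subset of N∖M that is self-decodable at node π(k). (The empty set is vacuously self-decodable, so D_k exists and is well-defined.) -/
open scoped BigOperators

set_option synthInstance.maxHeartbeats 1000000
set_option synthInstance.maxSize 1024
set_option maxHeartbeats 1000000

/-- Shannon entropy (natural log) of a random variable `X` on a finite sample
space `Ω` with probability mass function `μ`. -/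
noncomputable def entropy {Ω α : Type*} [Fintype Ω] [Fintype α] [DecidableEq α]
    (μ : Ω → ℝ) (X : Ω → α) : ℝ :=
  ∑ a : α, Real.negMulLog (∑ ω ∈ Finset.univ.filter (fun ω => X ω = a), μ ω)

/-- Conditional mutual information `I(X;Y|Z)` for random variables on a finite
sample space with pmf `μ`. -/
noncomputable def condMI {Ω α β γ : Type*} [Fintype Ω]
    [Fintype α] [DecidableEq α] [Fintype β] [DecidableEq β] [Fintype γ] [DecidableEq γ]
    (μ : Ω → ℝ) (X : Ω → α) (Y : Ω → β) (Z : Ω → γ) : ℝ :=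
  entropy μ (fun ω => (X ω, Z ω)) + entropy μ (fun ω => (Y ω, Z ω))
    - entropy μ (fun ω => (X ω, Y ω, Z ω)) - entropy μ Z

/-- Sample space for the unified D-F/C-F multiple-relay framework: a value of
`(q, x₀, (xᵢ)ᵢ, (yᵢ)ᵢ, y_{n+1}, (ŷᵢ)ᵢ)`. -/
abbrev DFOmega {n : ℕ} (QA X0A : Type) (XA YA : Fin n → Type) (YdA : Type)
    (YhA : Fin n → Type) : Type :=
  QA × X0A × (∀ i, XA i) × (∀ i, YA i) × YdA × (∀ i, YhA i)

section DF

variable {n Mc : ℕ} {QA X0A YdA : Type} {XA YA YhA : Fin n → Type}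

/-- The time-sharing variable `Q`. -/
def rvQ : DFOmega QA X0A XA YA YdA YhA → QA := fun ω => ω.1

/-- The source input `X₀`. -/
def rvX0 : DFOmega QA X0A XA YA YdA YhA → X0A := fun ω => ω.2.1

/-- The tuple of relay inputs `X_S = (Xᵢ)_{i∈S}`. -/
def rvXS (S : Finset (Fin n)) : DFOmega QA X0A XA YA YdA YhA → (∀ i : S, XA i) :=
  fun ω i => ω.2.2.1 i

/-- The tuple of relay outputs `Y_S = (Yᵢ)_{i∈S}`. -/
def rvYS (S : Finset (Fin n)) : DFOmega QA X0A XA YA YdA YhA → (∀ i : S, YA i) :=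
  fun ω i => ω.2.2.2.1 i

/-- The destination output `Y_{n+1}`. -/
def rvYd : DFOmega QA X0A XA YA YdA YhA → YdA := fun ω => ω.2.2.2.2.1

/-- The tuple of compressions `Ŷ_S = (Ŷᵢ)_{i∈S}`. -/
def rvYhS (S : Finset (Fin n)) : DFOmega QA X0A XA YA YdA YhA → (∀ i : S, YhA i) :=
  fun ω i => ω.2.2.2.2.2 i

/-- The joint pmf
`p(q)·p(x₀|q)·p(x_M|x₀,q)·∏_{i∈N∖M} p(xᵢ|q) · p(y₁,…,y_{n+1}|x₀,…,x_n) ·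
∏ p(ŷᵢ|yᵢ,xᵢ,q)`. -/
noncomputable def muDF (ℳ : Finset (Fin n)) (pQ : QA → ℝ) (p0 : QA → X0A → ℝ)
    (pM : QA → X0A → (∀ i : ℳ, XA i) → ℝ) (pC : ∀ i : Fin n, QA → XA i → ℝ)
    (W : X0A → (∀ i, XA i) → ((∀ i, YA i) × YdA) → ℝ)
    (κ : ∀ i : Fin n, QA → YA i → XA i → YhA i → ℝ) :
    DFOmega QA X0A XA YA YdA YhA → ℝ :=
  fun ω => pQ ω.1 * p0 ω.1 ω.2.1 * pM ω.1 ω.2.1 (fun i => ω.2.2.1 i)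
    * (∏ i ∈ ℳᶜ, pC i ω.1 (ω.2.2.1 i))
    * W ω.2.1 ω.2.2.1 (ω.2.2.2.1, ω.2.2.2.2.1)
    * ∏ i, κ i ω.1 (ω.2.2.2.1 i) (ω.2.2.1 i) (ω.2.2.2.2.2 i)

/-- The set of relays upstream of node `π(k)` in the D-F route, i.e. the relays
`π(2:k-1)` of the paper: with `σ` enumerating the D-F relays in route order and
`k : Fin (Mc+1)` standing for the paper's index `k+2 ∈ {2,…,M+2}`, this is
`{σ j : j < k}`. -/
def upSet (σ : Fin Mc → Fin n) (k : Fin (Mc + 1)) : Finset (Fin n) :=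
  (Finset.univ.filter (fun j : Fin Mc => (j : ℕ) < (k : ℕ))).image σ

/-- The set of relays `π(k:M+1)` of the paper, namely the D-F relays downstream
of (and including) node `π(k)`: `{σ j : k ≤ j}`. -/
def downSet (σ : Fin Mc → Fin n) (k : Fin (Mc + 1)) : Finset (Fin n) :=
  (Finset.univ.filter (fun j : Fin Mc => (k : ℕ) ≤ (j : ℕ))).image σ

/-- The alphabet of the channel output `Y_{π(k)}` observed at node `π(k)`: a relay
output for `k < Mc`, and the destination output for `k = Mc` (paper `k = M+2`). -/
def YkType (σ : Fin Mc → Fin n) (YA : Fin n → Type) (YdA : Type)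
    (k : Fin (Mc + 1)) : Type :=
  if h : (k : ℕ) < Mc then YA (σ ⟨(k : ℕ), h⟩) else YdA

instance YkType.instFintype (σ : Fin Mc → Fin n) [∀ i, Fintype (YA i)] [Fintype YdA]
    (k : Fin (Mc + 1)) : Fintype (YkType σ YA YdA k) := by
  unfold YkType; split <;> infer_instance

instance YkType.instDecidableEq (σ : Fin Mc → Fin n) [∀ i, DecidableEq (YA i)]
    [DecidableEq YdA] (k : Fin (Mc + 1)) : DecidableEq (YkType σ YA YdA k) := by
  unfold YkType; split <;> infer_instance

/-- The channel output `Y_{π(k)}` observed at node `π(k)`. -/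
def rvYk (σ : Fin Mc → Fin n) (k : Fin (Mc + 1))
    (ω : DFOmega QA X0A XA YA YdA YhA) : YkType σ YA YdA k :=
  if h : (k : ℕ) < Mc then
    cast (by simp [YkType, h]) (ω.2.2.2.1 (σ ⟨(k : ℕ), h⟩))
  else
    cast (by simp [YkType, h]) ω.2.2.2.2.1

variable [Fintype QA] [DecidableEq QA] [Fintype X0A] [DecidableEq X0A]
  [Fintype YdA] [DecidableEq YdA]
  [∀ i, Fintype (XA i)] [∀ i, DecidableEq (XA i)]
  [∀ i, Fintype (YA i)] [∀ i, DecidableEq (YA i)]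
  [∀ i, Fintype (YhA i)] [∀ i, DecidableEq (YhA i)]

/-- `F_k(T) = min_{S ⊆ T} [ I(X_{π(1:k-1)}, X_S; Ŷ_{T∖S}, Y_{π(k)} | X_{T∖S}, X_{π(k:M+1)}, Q)`
`− I(Y_S; Ŷ_S | X_{π(1:M+1)}, X_T, Y_{π(k)}, Ŷ_{T∖S}, Q) ]`, where `π(1:k-1)`
consists of the source `0` together with `upSet σ k`, `π(k:M+1) = downSet σ k`,
and `π(1:M+1)` consists of the source together with all D-F relays `ℳ`. -/
noncomputable def Fk (ℳ : Finset (Fin n)) (σ : Fin Mc → Fin n)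
    (μ : DFOmega QA X0A XA YA YdA YhA → ℝ) (k : Fin (Mc + 1))
    (T : Finset (Fin n)) : ℝ :=
  T.powerset.inf' (Finset.powerset_nonempty T) fun S =>
    condMI μ (fun ω => ((rvX0 ω, rvXS (upSet σ k) ω), rvXS S ω))
      (fun ω => (rvYhS (T \ S) ω, rvYk σ k ω))
      (fun ω => (rvXS (T \ S) ω, rvXS (downSet σ k) ω, rvQ ω))
    - condMI μ (rvYS S) (rvYhS S)
      (fun ω => ((rvX0 ω, rvXS ℳ ω), rvXS T ω, rvYk σ k ω, rvYhS (T \ S) ω, rvQ ω))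

/-- `D ⊆ N∖M` is self-decodable at node `π(k)` if for every nonempty `S ⊆ D`,
`I(X_S; Ŷ_{D∖S}, Y_{π(k)} | X_{π(1:M+1)}, X_{D∖S}, Q)`
`− I(Y_S; Ŷ_S | X_{π(1:M+1)}, X_D, Y_{π(k)}, Ŷ_{D∖S}, Q) > 0`. -/
def SelfDecodable (ℳ : Finset (Fin n)) (σ : Fin Mc → Fin n)
    (μ : DFOmega QA X0A XA YA YdA YhA → ℝ) (k : Fin (Mc + 1))
    (D : Finset (Fin n)) : Prop :=
  ∀ S ⊆ D, S.Nonempty →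
    0 < condMI μ (rvXS S) (fun ω => (rvYhS (D \ S) ω, rvYk σ k ω))
          (fun ω => ((rvX0 ω, rvXS ℳ ω), rvXS (D \ S) ω, rvQ ω))
      - condMI μ (rvYS S) (rvYhS S)
          (fun ω => ((rvX0 ω, rvXS ℳ ω), rvXS D ω, rvYk σ k ω, rvYhS (D \ S) ω, rvQ ω))

end DF

set_option linter.unusedSectionVars false

namespace SDAux

variable {Ω : Type*} [Fintype Ω] {α : Type*} [Fintype α] [DecidableEq α]
  {β : Type*} [Fintype β] [DecidableEq β] {γ : Type*} [Fintype γ] [DecidableEq γ]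

noncomputable def pmfOf (μ : Ω → ℝ) (X : Ω → α) (a : α) : ℝ :=
  ∑ ω ∈ Finset.univ.filter (fun ω => X ω = a), μ ω

lemma entropy_def (μ : Ω → ℝ) (X : Ω → α) :
    entropy μ X = ∑ a : α, Real.negMulLog (pmfOf μ X a) := rfl

lemma pmfOf_nonneg {μ : Ω → ℝ} (hμ : ∀ ω, 0 ≤ μ ω) (X : Ω → α) (a : α) :
    0 ≤ pmfOf μ X a := Finset.sum_nonneg fun _ _ => hμ _

lemma sum_pmfOf (μ : Ω → ℝ) (X : Ω → α) : ∑ a, pmfOf μ X a = ∑ ω, μ ω :=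
  Finset.sum_fiberwise _ _ _

lemma sum_pmfOf_mul (μ : Ω → ℝ) (X : Ω → α) (f : α → ℝ) :
    ∑ a, pmfOf μ X a * f a = ∑ ω, μ ω * f (X ω) := by
  rw [← Finset.sum_fiberwise (Finset.univ) X (fun ω => μ ω * f (X ω))]
  refine Finset.sum_congr rfl fun a _ => ?_
  rw [pmfOf, Finset.sum_mul]
  refine Finset.sum_congr rfl fun ω hω => ?_
  rw [(Finset.mem_filter.mp hω).2]

lemma pmfOf_pair_sum (μ : Ω → ℝ) (X : Ω → α) (Y : Ω → β) (a : α) :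
    ∑ b, pmfOf μ (fun ω => (X ω, Y ω)) (a, b) = pmfOf μ X a := by
  unfold pmfOf
  rw [← Finset.sum_fiberwise (Finset.univ.filter fun ω => X ω = a) Y μ]
  refine Finset.sum_congr rfl fun b _ => Finset.sum_congr ?_ fun _ _ => rfl
  rw [Finset.filter_filter]
  exact Finset.filter_congr fun ω _ => by simp [Prod.ext_iff, and_comm]

lemma pmfOf_congr (μ : Ω → ℝ) {X : Ω → α} {Y : Ω → β}
    (h : ∀ ω ω', X ω = X ω' ↔ Y ω = Y ω') (ω : Ω) :
    pmfOf μ X (X ω) = pmfOf μ Y (Y ω) :=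
  Finset.sum_congr (Finset.filter_congr fun ω' _ => by rw [eq_comm, h ω ω', eq_comm])
    fun _ _ => rfl

lemma pmfOf_eq_zero (μ : Ω → ℝ) (Z : Ω → α) (d : α)
    (hd : d ∉ Finset.univ.image Z) : pmfOf μ Z d = 0 := by
  have he : Finset.univ.filter (fun ω => Z ω = d) = ∅ := by
    ext ω
    simp only [Finset.mem_filter, Finset.notMem_empty, iff_false, not_and]
    intro _ hzd
    exact hd (hzd ▸ Finset.mem_image_of_mem _ (Finset.mem_univ ω))
  simp [pmfOf, he]

lemma entropy_congr (μ : Ω → ℝ) {X : Ω → α} {Y : Ω → β}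
    (h : ∀ ω ω', X ω = X ω' ↔ Y ω = Y ω') : entropy μ X = entropy μ Y := by
  classical
  rcases isEmpty_or_nonempty Ω with hΩ | hΩ
  · rw [entropy_def, entropy_def]
    have h1 : ∀ a : α, pmfOf μ X a = 0 := fun a =>
      pmfOf_eq_zero μ X a (by simp [Finset.eq_empty_of_isEmpty (Finset.univ : Finset Ω)])
    have h2 : ∀ b : β, pmfOf μ Y b = 0 := fun b =>
      pmfOf_eq_zero μ Y b (by simp [Finset.eq_empty_of_isEmpty (Finset.univ : Finset Ω)])
    simp [h1, h2]
  · have : Inhabited Ω := Classical.inhabited_of_nonempty hΩ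
    rw [entropy_def, entropy_def,
      ← Finset.sum_subset (Finset.subset_univ (Finset.univ.image X))
        (fun a _ ha => by rw [pmfOf_eq_zero μ X a ha]; simp),
      ← Finset.sum_subset (Finset.subset_univ (Finset.univ.image Y))
        (fun b _ hb => by rw [pmfOf_eq_zero μ Y b hb]; simp)]
    set F : α → β := fun a => Y (if h : ∃ ω, X ω = a then h.choose else default) with hF
    set G : β → α := fun b => X (if h : ∃ ω, Y ω = b then h.choose else default) with hG
    have hFX : ∀ ω, F (X ω) = Y ω := by
      intro ω
      have hex : ∃ ω', X ω' = X ω := ⟨ω, rfl⟩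
      simp only [hF, hex, dif_pos]
      exact (h _ _).mp hex.choose_spec
    have hGY : ∀ ω, G (Y ω) = X ω := by
      intro ω
      have hex : ∃ ω', Y ω' = Y ω := ⟨ω, rfl⟩
      simp only [hG, hex, dif_pos]
      exact (h _ _).mpr hex.choose_spec
    refine Finset.sum_nbij' F G ?_ ?_ ?_ ?_ ?_
    · intro a ha
      obtain ⟨ω, -, rfl⟩ := Finset.mem_image.mp ha
      rw [hFX]
      exact Finset.mem_image_of_mem _ (Finset.mem_univ ω)
    · intro b hb
      obtain ⟨ω, -, rfl⟩ := Finset.mem_image.mp hb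
      rw [hGY]
      exact Finset.mem_image_of_mem _ (Finset.mem_univ ω)
    · intro a ha
      obtain ⟨ω, -, rfl⟩ := Finset.mem_image.mp ha
      rw [hFX, hGY]
    · intro b hb
      obtain ⟨ω, -, rfl⟩ := Finset.mem_image.mp hb
      rw [hGY, hFX]
    · intro a ha
      obtain ⟨ω, -, rfl⟩ := Finset.mem_image.mp ha
      rw [hFX, pmfOf_congr μ h ω]


lemma pmfOf_iff (μ : Ω → ℝ) {X : Ω → α} {Y : Ω → β} {a : α} {b : β}
    (h : ∀ ω, X ω = a ↔ Y ω = b) : pmfOf μ X a = pmfOf μ Y b :=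
  Finset.sum_congr (Finset.filter_congr fun ω _ => by rw [h ω]) fun _ _ => rfl

private lemma point_bound {p pa pb pc : ℝ} (hp : 0 ≤ p) (hpa : p ≤ pa) (hpb : p ≤ pb)
    (hbc : pb ≤ pc) :
    p - pa * pb / pc ≤ p * (Real.log p + Real.log pc - Real.log pa - Real.log pb) := by
  rcases eq_or_lt_of_le hp with h0 | h0
  · have hpa0 : 0 ≤ pa := le_trans hp hpa
    have hpb0 : 0 ≤ pb := le_trans hp hpb
    have hpc0 : 0 ≤ pc := le_trans hpb0 hbc
    rw [← h0]
    simp only [zero_mul, zero_sub]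
    exact neg_nonpos_of_nonneg (div_nonneg (mul_nonneg hpa0 hpb0) hpc0)
  · have hpa0 : 0 < pa := lt_of_lt_of_le h0 hpa
    have hpb0 : 0 < pb := lt_of_lt_of_le h0 hpb
    have hpc0 : 0 < pc := lt_of_lt_of_le hpb0 hbc
    have hu : 0 < pa * pb / (p * pc) :=
      div_pos (mul_pos hpa0 hpb0) (mul_pos h0 hpc0)
    have hlog : Real.log (pa * pb / (p * pc)) ≤ pa * pb / (p * pc) - 1 :=
      Real.log_le_sub_one_of_pos hu
    have hexp : Real.log (pa * pb / (p * pc))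
        = Real.log pa + Real.log pb - Real.log p - Real.log pc := by
      rw [Real.log_div (by positivity) (by positivity), Real.log_mul (ne_of_gt hpa0)
        (ne_of_gt hpb0), Real.log_mul (ne_of_gt h0) (ne_of_gt hpc0)]
      ring
    have hmul := mul_le_mul_of_nonneg_left hlog (le_of_lt h0)
    rw [hexp] at hmul
    have hpu : p * (pa * pb / (p * pc)) = pa * pb / pc := by
      field_simp
    nlinarith [hmul, hpu]

lemma condMI_nonneg (μ : Ω → ℝ) (hμ0 : ∀ ω, 0 ≤ μ ω) (hμ1 : ∑ ω, μ ω = 1)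
    (X : Ω → α) (Y : Ω → β) (Z : Ω → γ) : 0 ≤ condMI μ X Y Z := by
  classical
  set p : α × β × γ → ℝ := pmfOf μ (fun ω => (X ω, Y ω, Z ω)) with hp
  set pAC : α → γ → ℝ := fun a c => pmfOf μ (fun ω => (X ω, Z ω)) (a, c) with hpAC
  set pBC : β → γ → ℝ := fun b c => pmfOf μ (fun ω => (Y ω, Z ω)) (b, c) with hpBC
  set pC : γ → ℝ := fun c => pmfOf μ Z c with hpC
  have hpnn : ∀ x, 0 ≤ p x := fun x => pmfOf_nonneg hμ0 _ _
  -- marginal identities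
  have hAC : ∀ a c, pAC a c = ∑ b, p (a, b, c) := by
    intro a c
    have h1 : ∀ b : β, p (a, b, c)
        = pmfOf μ (fun ω => ((X ω, Z ω), Y ω)) ((a, c), b) := fun b =>
      pmfOf_iff μ (fun ω => by simp only [Prod.ext_iff]; tauto)
    simp only [h1]
    exact (pmfOf_pair_sum μ (fun ω => (X ω, Z ω)) Y (a, c)).symm
  have hBC : ∀ b c, pBC b c = ∑ a, p (a, b, c) := by
    intro b c
    have h1 : ∀ a : α, p (a, b, c)
        = pmfOf μ (fun ω => ((Y ω, Z ω), X ω)) ((b, c), a) := fun a =>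
      pmfOf_iff μ (fun ω => by simp only [Prod.ext_iff]; tauto)
    simp only [h1]
    exact (pmfOf_pair_sum μ (fun ω => (Y ω, Z ω)) X (b, c)).symm
  have hCA : ∀ c, pC c = ∑ a, pAC a c := by
    intro c
    have h1 : ∀ a : α, pAC a c = pmfOf μ (fun ω => (Z ω, X ω)) (c, a) := fun a =>
      pmfOf_iff μ (fun ω => by simp only [Prod.ext_iff]; tauto)
    simp only [h1]
    exact (pmfOf_pair_sum μ Z X c).symm
  have hCB : ∀ c, pC c = ∑ b, pBC b c := by
    intro c
    have h1 : ∀ b : β, pBC b c = pmfOf μ (fun ω => (Z ω, Y ω)) (c, b) := fun b =>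
      pmfOf_iff μ (fun ω => by simp only [Prod.ext_iff]; tauto)
    simp only [h1]
    exact (pmfOf_pair_sum μ Z Y c).symm
  have hACnn : ∀ a c, 0 ≤ pAC a c := fun a c => pmfOf_nonneg hμ0 _ _
  have hBCnn : ∀ b c, 0 ≤ pBC b c := fun b c => pmfOf_nonneg hμ0 _ _
  have hCnn : ∀ c, 0 ≤ pC c := fun c => pmfOf_nonneg hμ0 _ _
  have hple : ∀ a b c, p (a, b, c) ≤ pAC a c := by
    intro a b c; rw [hAC]
    exact Finset.single_le_sum (fun b' _ => hpnn (a, b', c)) (Finset.mem_univ b)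
  have hpleB : ∀ a b c, p (a, b, c) ≤ pBC b c := by
    intro a b c; rw [hBC]
    exact Finset.single_le_sum (fun a' _ => hpnn (a', b, c)) (Finset.mem_univ a)
  have hBleC : ∀ b c, pBC b c ≤ pC c := by
    intro b c; rw [hCB]
    exact Finset.single_le_sum (fun b' _ => hBCnn b' c) (Finset.mem_univ b)
  have hsumC : ∑ c, pC c = 1 := by rw [hpC]; rw [sum_pmfOf μ Z, hμ1]
  have hsump : ∑ a, ∑ b, ∑ c, p (a, b, c) = 1 := by
    have := sum_pmfOf μ (fun ω => (X ω, Y ω, Z ω))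
    rw [hμ1] at this
    rw [← this, Fintype.sum_prod_type]
    exact Finset.sum_congr rfl fun a _ => by rw [Fintype.sum_prod_type]
  -- entropy rewrites
  set SA : ℝ := ∑ a, ∑ b, ∑ c, p (a, b, c) * Real.log (pAC a c) with hSA
  set SB : ℝ := ∑ a, ∑ b, ∑ c, p (a, b, c) * Real.log (pBC b c) with hSB
  set SJ : ℝ := ∑ a, ∑ b, ∑ c, p (a, b, c) * Real.log (p (a, b, c)) with hSJ
  set SC : ℝ := ∑ a, ∑ b, ∑ c, p (a, b, c) * Real.log (pC c) with hSC
  have hentJ : entropy μ (fun ω => (X ω, Y ω, Z ω)) = -SJ := by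
    rw [entropy_def, Fintype.sum_prod_type, hSJ, ← Finset.sum_neg_distrib]
    refine Finset.sum_congr rfl fun a _ => ?_
    rw [Fintype.sum_prod_type, ← Finset.sum_neg_distrib]
    refine Finset.sum_congr rfl fun b _ => ?_
    rw [← Finset.sum_neg_distrib]
    refine Finset.sum_congr rfl fun c _ => ?_
    simp only [Real.negMulLog_def]
    ring
  have hentA : entropy μ (fun ω => (X ω, Z ω)) = -SA := by
    rw [entropy_def, Fintype.sum_prod_type, hSA, ← Finset.sum_neg_distrib]
    refine Finset.sum_congr rfl fun a _ => ?_
    have inner : ∀ c, Real.negMulLog (pAC a c) = ∑ b, -(p (a, b, c) * Real.log (pAC a c)) := by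
      intro c
      simp only [Real.negMulLog_def]
      have : -pAC a c * Real.log (pAC a c) = -((∑ b, p (a, b, c)) * Real.log (pAC a c)) := by
        rw [← hAC]; ring
      rw [this, Finset.sum_mul, ← Finset.sum_neg_distrib]
    refine (Finset.sum_congr rfl fun c _ => inner c).trans ?_
    rw [Finset.sum_comm, ← Finset.sum_neg_distrib]
    refine Finset.sum_congr rfl fun b _ => ?_
    rw [← Finset.sum_neg_distrib]
  have hentB : entropy μ (fun ω => (Y ω, Z ω)) = -SB := by
    rw [entropy_def, Fintype.sum_prod_type, hSB]
    have inner : ∀ b c, Real.negMulLog (pBC b c) = ∑ a, -(p (a, b, c) * Real.log (pBC b c)) := by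
      intro b c
      simp only [Real.negMulLog_def]
      have : -pBC b c * Real.log (pBC b c) = -((∑ a, p (a, b, c)) * Real.log (pBC b c)) := by
        rw [← hBC]; ring
      rw [this, Finset.sum_mul, ← Finset.sum_neg_distrib]
    refine (Finset.sum_congr rfl fun b _ => Finset.sum_congr rfl fun c _ => inner b c).trans ?_
    have : ∀ b, ∑ c, ∑ a, -(p (a, b, c) * Real.log (pBC b c))
        = ∑ a, ∑ c, -(p (a, b, c) * Real.log (pBC b c)) := fun b => Finset.sum_comm
    simp only [this]
    rw [Finset.sum_comm, ← Finset.sum_neg_distrib]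
    refine Finset.sum_congr rfl fun a _ => ?_
    rw [← Finset.sum_neg_distrib]
    refine Finset.sum_congr rfl fun b _ => ?_
    rw [← Finset.sum_neg_distrib]
  have hentC : entropy μ Z = -SC := by
    rw [entropy_def, hSC]
    have inner : ∀ c, Real.negMulLog (pC c) = ∑ a, ∑ b, -(p (a, b, c) * Real.log (pC c)) := by
      intro c
      simp only [Real.negMulLog_def]
      have h2 : pC c = ∑ a, ∑ b, p (a, b, c) := by
        rw [hCA]
        exact Finset.sum_congr rfl fun a _ => hAC a c
      have : -pC c * Real.log (pC c) = -((∑ a, ∑ b, p (a, b, c)) * Real.log (pC c)) := by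
        rw [← h2]; ring
      rw [this, Finset.sum_mul, ← Finset.sum_neg_distrib]
      refine Finset.sum_congr rfl fun a _ => ?_
      rw [Finset.sum_mul, ← Finset.sum_neg_distrib]
    refine (Finset.sum_congr rfl fun c _ => inner c).trans ?_
    rw [Finset.sum_comm, ← Finset.sum_neg_distrib]
    refine Finset.sum_congr rfl fun a _ => ?_
    rw [Finset.sum_comm, ← Finset.sum_neg_distrib]
    refine Finset.sum_congr rfl fun b _ => ?_
    rw [← Finset.sum_neg_distrib]
  have key : condMI μ X Y Z = SJ + SC - SA - SB := by
    rw [condMI, hentJ, hentA, hentB, hentC]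
    ring
  -- lower bound
  have hbound : ∀ a b c, p (a, b, c) - pAC a c * pBC b c / pC c
      ≤ p (a, b, c) * (Real.log (p (a, b, c)) + Real.log (pC c)
        - Real.log (pAC a c) - Real.log (pBC b c)) := fun a b c =>
    point_bound (hpnn (a, b, c)) (hple a b c) (hpleB a b c) (hBleC b c)
  have hS1 : ∑ a, ∑ b, ∑ c, (p (a, b, c) - pAC a c * pBC b c / pC c)
      ≤ SJ + SC - SA - SB := by
    rw [hSJ, hSC, hSA, hSB]
    have expand : ∑ a, ∑ b, ∑ c, p (a, b, c) * (Real.log (p (a, b, c)) + Real.log (pC c)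
        - Real.log (pAC a c) - Real.log (pBC b c))
        = (∑ a, ∑ b, ∑ c, p (a, b, c) * Real.log (p (a, b, c)))
          + (∑ a, ∑ b, ∑ c, p (a, b, c) * Real.log (pC c))
          - (∑ a, ∑ b, ∑ c, p (a, b, c) * Real.log (pAC a c))
          - (∑ a, ∑ b, ∑ c, p (a, b, c) * Real.log (pBC b c)) := by
      simp only [mul_add, mul_sub, Finset.sum_add_distrib, Finset.sum_sub_distrib]
    rw [← expand]
    refine Finset.sum_le_sum fun a _ => Finset.sum_le_sum fun b _ =>
      Finset.sum_le_sum fun c _ => hbound a b c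
  have hS2 : ∑ a, ∑ b, ∑ c, (pAC a c * pBC b c / pC c) ≤ 1 := by
    have reorder : ∑ a, ∑ b, ∑ c, (pAC a c * pBC b c / pC c)
        = ∑ c, ∑ a, ∑ b, (pAC a c * pBC b c / pC c) := by
      have h1 : ∀ a, ∑ b, ∑ c, pAC a c * pBC b c / pC c
          = ∑ c, ∑ b, pAC a c * pBC b c / pC c := fun a => Finset.sum_comm
      simp only [h1]
      exact Finset.sum_comm
    rw [reorder, ← hsumC]
    refine Finset.sum_le_sum fun c _ => ?_
    have hfac : ∑ a, ∑ b, pAC a c * pBC b c / pC c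
        = (∑ a, pAC a c) * (∑ b, pBC b c) / pC c := by
      rw [Finset.sum_mul, Finset.sum_div]
      refine Finset.sum_congr rfl fun a _ => ?_
      rw [Finset.mul_sum, Finset.sum_div]
    rw [hfac, ← hCA, ← hCB]
    rcases eq_or_ne (pC c) 0 with h0 | h0
    · rw [h0]; simp
    · rw [mul_div_assoc, div_self h0, mul_one]
  -- conclude
  have hsum3 : ∑ a, ∑ b, ∑ c, (p (a, b, c) - pAC a c * pBC b c / pC c)
      = 1 - ∑ a, ∑ b, ∑ c, (pAC a c * pBC b c / pC c) := by
    simp only [Finset.sum_sub_distrib]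
    rw [hsump]
  rw [key]
  have := hS1
  rw [hsum3] at this
  linarith


lemma pmfOf_fst_sum (μ : Ω → ℝ) (U : Ω → α) (W : Ω → γ) (w : γ) :
    ∑ a, pmfOf μ (fun ω => (U ω, W ω)) (a, w) = pmfOf μ W w := by
  have h1 : ∀ a : α, pmfOf μ (fun ω => (U ω, W ω)) (a, w)
      = pmfOf μ (fun ω => (W ω, U ω)) (w, a) := fun a =>
    pmfOf_iff μ (fun ω => by simp only [Prod.ext_iff]; tauto)
  simp only [h1]
  exact pmfOf_pair_sum μ W U w

/-- Kernel factorization of a joint pmf, via an update map on the sample space. -/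
lemma pmfOf_kernel {ι : Type*} (μ ν : Ω → ℝ) (U : Ω → α) (W : Ω → γ)
    (κ : ι → α → ℝ) (g : γ → ι) (upd : Ω → α → Ω)
    (hupdU : ∀ ω a, U (upd ω a) = a)
    (hupdid : ∀ ω, upd ω (U ω) = ω)
    (hupd2 : ∀ ω a a', upd (upd ω a) a' = upd ω a')
    (hW : ∀ ω a, W (upd ω a) = W ω)
    (hν : ∀ ω a, ν (upd ω a) = ν ω)
    (hμν : ∀ ω, μ ω = ν ω * κ (g (W ω)) (U ω))
    (hκ1 : ∀ i, ∑ a, κ i a = 1)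
    (a : α) (w : γ) :
    pmfOf μ (fun ω => (U ω, W ω)) (a, w) = κ (g w) a * pmfOf μ W w := by
  classical
  set T : α → Finset Ω := fun a' => Finset.univ.filter (fun ω => U ω = a' ∧ W ω = w) with hT
  have hfilter : ∀ a' : α, Finset.univ.filter (fun ω => (U ω, W ω) = (a', w)) = T a' := by
    intro a'
    refine Finset.filter_congr fun ω _ => by simp [Prod.ext_iff]
  have hval : ∀ a' : α, pmfOf μ (fun ω => (U ω, W ω)) (a', w)
      = κ (g w) a' * ∑ ω ∈ T a', ν ω := by
    intro a'
    rw [pmfOf, hfilter, Finset.mul_sum]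
    refine Finset.sum_congr rfl fun ω hω => ?_
    obtain ⟨-, hU, hWw⟩ := Finset.mem_filter.mp hω
    rw [hμν ω, hU, hWw]
    ring
  have hNsame : ∀ a' : α, ∑ ω ∈ T a', ν ω = ∑ ω ∈ T a, ν ω := by
    intro a'
    refine Finset.sum_nbij' (fun ω => upd ω a) (fun ω => upd ω a') ?_ ?_ ?_ ?_ ?_
    · intro ω hω
      obtain ⟨-, hU, hWw⟩ := Finset.mem_filter.mp hω
      exact Finset.mem_filter.mpr ⟨Finset.mem_univ _, hupdU ω a, (hW ω a).trans hWw⟩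
    · intro ω hω
      obtain ⟨-, hU, hWw⟩ := Finset.mem_filter.mp hω
      exact Finset.mem_filter.mpr ⟨Finset.mem_univ _, hupdU ω a', (hW ω a').trans hWw⟩
    · intro ω hω
      obtain ⟨-, hU, hWw⟩ := Finset.mem_filter.mp hω
      show upd (upd ω a) a' = ω
      rw [hupd2, ← hU, hupdid]
    · intro ω hω
      obtain ⟨-, hU, hWw⟩ := Finset.mem_filter.mp hω
      show upd (upd ω a') a = ω
      rw [hupd2, ← hU, hupdid]
    · intro ω hω
      exact (hν ω a).symm
  have hpW : pmfOf μ W w = ∑ ω ∈ T a, ν ω := by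
    rw [← pmfOf_fst_sum μ U W w]
    have : ∀ a' : α, pmfOf μ (fun ω => (U ω, W ω)) (a', w)
        = κ (g w) a' * ∑ ω ∈ T a, ν ω := fun a' => by rw [hval, hNsame]
    simp only [this]
    rw [← Finset.sum_mul, hκ1, one_mul]
  rw [hval, hNsame a, hpW]

/-- Conditional entropy of a coordinate generated by a kernel. -/
lemma entropy_pair_kernel {ι : Type*} (μ : Ω → ℝ) (U : Ω → α) (W : Ω → γ)
    (κ : ι → α → ℝ) (g : γ → ι)
    (hker : ∀ a w, pmfOf μ (fun ω => (U ω, W ω)) (a, w) = κ (g w) a * pmfOf μ W w)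
    (hκ1 : ∀ i, ∑ a, κ i a = 1) :
    entropy μ (fun ω => (U ω, W ω))
      = entropy μ W + ∑ ω, μ ω * (∑ a, Real.negMulLog (κ (g (W ω)) a)) := by
  rw [entropy_def, Fintype.sum_prod_type]
  have step : ∀ a w, Real.negMulLog (pmfOf μ (fun ω => (U ω, W ω)) (a, w))
      = pmfOf μ W w * Real.negMulLog (κ (g w) a)
        + κ (g w) a * Real.negMulLog (pmfOf μ W w) := by
    intro a w
    rw [hker, Real.negMulLog_mul]
  simp only [step]
  rw [Finset.sum_comm]
  have inner : ∀ w, ∑ a, (pmfOf μ W w * Real.negMulLog (κ (g w) a)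
      + κ (g w) a * Real.negMulLog (pmfOf μ W w))
      = pmfOf μ W w * (∑ a, Real.negMulLog (κ (g w) a)) + Real.negMulLog (pmfOf μ W w) := by
    intro w
    rw [Finset.sum_add_distrib, ← Finset.mul_sum, ← Finset.sum_mul, hκ1, one_mul]
  simp only [inner]
  rw [Finset.sum_add_distrib, ← entropy_def, sum_pmfOf_mul μ W
    (fun w => ∑ a, Real.negMulLog (κ (g w) a))]
  ring

/-- Entropy of a pushed-forward random variable. -/
lemma entropy_comp {Ω₂ : Type*} [Fintype Ω₂] [DecidableEq Ω₂] (μ : Ω → ℝ) (π : Ω → Ω₂) (ν : Ω₂ → ℝ)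
    (hν : ∀ v, pmfOf μ π v = ν v) (Z : Ω₂ → α) :
    entropy μ (fun ω => Z (π ω)) = entropy ν Z := by
  classical
  rw [entropy_def, entropy_def]
  refine Finset.sum_congr rfl fun d _ => ?_
  congr 1
  have h1 : pmfOf ν Z d = ∑ v ∈ Finset.univ.filter (fun v => Z v = d), pmfOf μ π v :=
    Finset.sum_congr rfl fun v _ => (hν v).symm
  rw [h1]
  unfold pmfOf
  rw [Finset.sum_fiberwise_eq_sum_filter Finset.univ
    (Finset.univ.filter (fun v => Z v = d)) π μ]
  refine Finset.sum_congr ?_ fun _ _ => rfl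
  refine Finset.filter_congr fun ω _ => by simp

lemma sum_comp_pmf {Ω₂ : Type*} [Fintype Ω₂] [DecidableEq Ω₂] (μ : Ω → ℝ) (π : Ω → Ω₂) (ν : Ω₂ → ℝ)
    (hν : ∀ v, pmfOf μ π v = ν v) (f : Ω₂ → ℝ) :
    ∑ ω, μ ω * f (π ω) = ∑ v, ν v * f v := by
  rw [← sum_pmfOf_mul μ π f]
  exact Finset.sum_congr rfl fun v _ => by rw [hν]

end SDAux

section SDMain
open SDAux

variable {n Mc : ℕ} {QA X0A YdA : Type} {XA YA YhA : Fin n → Type}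
  [Fintype QA] [DecidableEq QA] [Fintype X0A] [DecidableEq X0A]
  [Fintype YdA] [DecidableEq YdA]
  [∀ i, Fintype (XA i)] [∀ i, DecidableEq (XA i)]
  [∀ i, Fintype (YA i)] [∀ i, DecidableEq (YA i)]
  [∀ i, Fintype (YhA i)] [∀ i, DecidableEq (YhA i)]

variable (ℳ : Finset (Fin n)) (σ : Fin Mc → Fin n) (k : Fin (Mc + 1))
  (μ : DFOmega QA X0A XA YA YdA YhA → ℝ)

lemma rvXS_eq_iff {S : Finset (Fin n)} {ω ω' : DFOmega QA X0A XA YA YdA YhA} :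
    rvXS (XA := XA) S ω = rvXS S ω' ↔ ∀ i ∈ S, ω.2.2.1 i = ω'.2.2.1 i := by
  constructor
  · intro h i hi; exact congrFun h ⟨i, hi⟩
  · intro h; funext i; exact h i i.2

lemma rvYS_eq_iff {S : Finset (Fin n)} {ω ω' : DFOmega QA X0A XA YA YdA YhA} :
    rvYS (YA := YA) S ω = rvYS S ω' ↔ ∀ i ∈ S, ω.2.2.2.1 i = ω'.2.2.2.1 i := by
  constructor
  · intro h i hi; exact congrFun h ⟨i, hi⟩
  · intro h; funext i; exact h i i.2

lemma rvYhS_eq_iff {S : Finset (Fin n)} {ω ω' : DFOmega QA X0A XA YA YdA YhA} :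
    rvYhS (YhA := YhA) S ω = rvYhS S ω' ↔ ∀ i ∈ S, ω.2.2.2.2.2 i = ω'.2.2.2.2.2 i := by
  constructor
  · intro h i hi; exact congrFun h ⟨i, hi⟩
  · intro h; funext i; exact h i i.2

lemma forall_sdiff_subset {S D : Finset (Fin n)} (h : S ⊆ D) (P : Fin n → Prop) :
    ((∀ i ∈ S, P i) ∧ ∀ i ∈ D \ S, P i) ↔ ∀ i ∈ D, P i := by
  rw [← Finset.forall_mem_union, Finset.union_sdiff_of_subset h]

lemma forall_sdiff_inter (A B : Finset (Fin n)) (P : Fin n → Prop) :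
    ((∀ i ∈ A \ B, P i) ∧ ∀ i ∈ A ∩ B, P i) ↔ ∀ i ∈ A, P i := by
  rw [← Finset.forall_mem_union, Finset.sdiff_union_inter]

/-- Canonical entropy of `(X₀, X_{A∪ℳ}, Y_B, Ŷ_C, Y_{π(k)}, Q)`. -/
noncomputable def hallE (A B C : Finset (Fin n)) : ℝ :=
  entropy μ (fun ω =>
    (rvX0 ω, rvXS (A ∪ ℳ) ω, rvYS B ω, rvYhS C ω, rvYk σ k ω, rvQ ω))

/-- Canonical entropy of `(X₀, X_{A∪ℳ}, Q)`. -/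
noncomputable def hXE (A : Finset (Fin n)) : ℝ :=
  entropy μ (fun ω => (rvX0 ω, rvXS (A ∪ ℳ) ω, rvQ ω))

lemma congr_T1 {D S : Finset (Fin n)} (hS : S ⊆ D) :
    entropy μ (fun ω => (rvXS S ω, ((rvX0 ω, rvXS ℳ ω), rvXS (D \ S) ω, rvQ ω)))
      = hXE ℳ μ D := by
  classical
  refine entropy_congr μ fun ω ω' => ?_
  simp only [Prod.ext_iff, rvXS_eq_iff, rvQ, rvX0, Finset.forall_mem_union]
  simp only [← forall_sdiff_subset hS]
  tauto


lemma forall_mem_empty' (P : Fin n → Prop) :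
    (∀ i ∈ (∅ : Finset (Fin n)), P i) ↔ True := by simp

lemma forall_union_pieces (A B : Finset (Fin n)) (P : Fin n → Prop) :
    ((∀ i ∈ A \ B, P i) ∧ (∀ i ∈ B \ A, P i) ∧ ∀ i ∈ A ∩ B, P i) ↔ ∀ i ∈ A ∪ B, P i := by
  rw [← Finset.sdiff_union_self_eq_union, Finset.forall_mem_union,
    ← forall_sdiff_inter B A, Finset.inter_comm B A]
  try tauto

lemma congr_T2 (D S : Finset (Fin n)) :
    entropy μ (fun ω => ((rvYhS (D \ S) ω, rvYk σ k ω),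
        ((rvX0 ω, rvXS ℳ ω), rvXS (D \ S) ω, rvQ ω)))
      = hallE ℳ σ k μ (D \ S) ∅ (D \ S) := by
  classical
  refine entropy_congr μ fun ω ω' => ?_
  simp only [hallE, Prod.ext_iff, rvXS_eq_iff, rvYS_eq_iff, rvYhS_eq_iff, rvQ, rvX0,
    Finset.forall_mem_union, forall_mem_empty']
  tauto

lemma congr_T3 {D S : Finset (Fin n)} (hS : S ⊆ D) :
    entropy μ (fun ω => (rvXS S ω, (rvYhS (D \ S) ω, rvYk σ k ω),
        ((rvX0 ω, rvXS ℳ ω), rvXS (D \ S) ω, rvQ ω)))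
      = hallE ℳ σ k μ D ∅ (D \ S) := by
  classical
  refine entropy_congr μ fun ω ω' => ?_
  simp only [hallE, Prod.ext_iff, rvXS_eq_iff, rvYS_eq_iff, rvYhS_eq_iff, rvQ, rvX0,
    Finset.forall_mem_union, forall_mem_empty']
  simp only [← forall_sdiff_subset hS]
  tauto

lemma congr_T4 (D S : Finset (Fin n)) :
    entropy μ (fun ω => ((rvX0 ω, rvXS ℳ ω), rvXS (D \ S) ω, rvQ ω))
      = hXE ℳ μ (D \ S) := by
  classical
  refine entropy_congr μ fun ω ω' => ?_
  simp only [hXE, Prod.ext_iff, rvXS_eq_iff, rvQ, rvX0, Finset.forall_mem_union]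
  tauto

lemma congr_T5 (D S : Finset (Fin n)) :
    entropy μ (fun ω => (rvYS S ω,
        ((rvX0 ω, rvXS ℳ ω), rvXS D ω, rvYk σ k ω, rvYhS (D \ S) ω, rvQ ω)))
      = hallE ℳ σ k μ D S (D \ S) := by
  classical
  refine entropy_congr μ fun ω ω' => ?_
  simp only [hallE, Prod.ext_iff, rvXS_eq_iff, rvYS_eq_iff, rvYhS_eq_iff, rvQ, rvX0,
    Finset.forall_mem_union]
  tauto

lemma congr_T6 {D S : Finset (Fin n)} (hS : S ⊆ D) :
    entropy μ (fun ω => (rvYhS S ω,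
        ((rvX0 ω, rvXS ℳ ω), rvXS D ω, rvYk σ k ω, rvYhS (D \ S) ω, rvQ ω)))
      = hallE ℳ σ k μ D ∅ D := by
  classical
  refine entropy_congr μ fun ω ω' => ?_
  simp only [hallE, Prod.ext_iff, rvXS_eq_iff, rvYS_eq_iff, rvYhS_eq_iff, rvQ, rvX0,
    Finset.forall_mem_union, forall_mem_empty']
  simp only [← forall_sdiff_subset hS]
  tauto

lemma congr_T7 {D S : Finset (Fin n)} (hS : S ⊆ D) :
    entropy μ (fun ω => (rvYS S ω, rvYhS S ω,
        ((rvX0 ω, rvXS ℳ ω), rvXS D ω, rvYk σ k ω, rvYhS (D \ S) ω, rvQ ω)))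
      = hallE ℳ σ k μ D S D := by
  classical
  refine entropy_congr μ fun ω ω' => ?_
  simp only [hallE, Prod.ext_iff, rvXS_eq_iff, rvYS_eq_iff, rvYhS_eq_iff, rvQ, rvX0,
    Finset.forall_mem_union]
  simp only [← forall_sdiff_subset hS]
  tauto

lemma congr_T8 (D S : Finset (Fin n)) :
    entropy μ (fun ω =>
        ((rvX0 ω, rvXS ℳ ω), rvXS D ω, rvYk σ k ω, rvYhS (D \ S) ω, rvQ ω))
      = hallE ℳ σ k μ D ∅ (D \ S) := by
  classical
  refine entropy_congr μ fun ω ω' => ?_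
  simp only [hallE, Prod.ext_iff, rvXS_eq_iff, rvYS_eq_iff, rvYhS_eq_iff, rvQ, rvX0,
    Finset.forall_mem_union, forall_mem_empty']
  tauto

lemma congr_U1 (A B : Finset (Fin n)) :
    entropy μ (fun ω => ((rvXS (A \ B) ω, rvYhS (A \ B) ω),
        (rvX0 ω, rvXS ((A ∩ B) ∪ ℳ) ω, rvYS (∅ : Finset (Fin n)) ω,
          rvYhS (A ∩ B) ω, rvYk σ k ω, rvQ ω)))
      = hallE ℳ σ k μ A ∅ A := by
  classical
  refine entropy_congr μ fun ω ω' => ?_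
  simp only [hallE, Prod.ext_iff, rvXS_eq_iff, rvYS_eq_iff, rvYhS_eq_iff, rvQ, rvX0,
    Finset.forall_mem_union, forall_mem_empty']
  simp only [← forall_sdiff_inter A B]
  tauto

lemma congr_U2 (A B : Finset (Fin n)) :
    entropy μ (fun ω => ((rvXS (B \ A) ω, rvYhS (B \ A) ω),
        (rvX0 ω, rvXS ((A ∩ B) ∪ ℳ) ω, rvYS (∅ : Finset (Fin n)) ω,
          rvYhS (A ∩ B) ω, rvYk σ k ω, rvQ ω)))
      = hallE ℳ σ k μ B ∅ B := by
  classical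
  refine entropy_congr μ fun ω ω' => ?_
  simp only [hallE, Prod.ext_iff, rvXS_eq_iff, rvYS_eq_iff, rvYhS_eq_iff, rvQ, rvX0,
    Finset.forall_mem_union, forall_mem_empty']
  simp only [Finset.inter_comm A B, ← forall_sdiff_inter B A]
  tauto

set_option synthInstance.maxSize 8192 in
set_option synthInstance.maxHeartbeats 4000000 in
lemma congr_U3 (A B : Finset (Fin n)) :
    entropy μ (fun ω => ((rvXS (A \ B) ω, rvYhS (A \ B) ω),
        (rvXS (B \ A) ω, rvYhS (B \ A) ω),
        (rvX0 ω, rvXS ((A ∩ B) ∪ ℳ) ω, rvYS (∅ : Finset (Fin n)) ω,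
          rvYhS (A ∩ B) ω, rvYk σ k ω, rvQ ω)))
      = hallE ℳ σ k μ (A ∪ B) ∅ (A ∪ B) := by
  classical
  refine entropy_congr μ fun ω ω' => ?_
  simp only [hallE, Prod.ext_iff, rvXS_eq_iff, rvYS_eq_iff, rvYhS_eq_iff, rvQ, rvX0,
    Finset.forall_mem_union, forall_mem_empty']
  simp only [← forall_sdiff_inter A B]
  simp only [Finset.inter_comm A B, ← forall_sdiff_inter B A]
  tauto

set_option synthInstance.maxSize 8192 in
set_option synthInstance.maxHeartbeats 4000000 in
lemma psi_submod (hμ0 : ∀ ω, 0 ≤ μ ω) (hμ1 : ∑ ω, μ ω = 1) (A B : Finset (Fin n)) :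
    hallE ℳ σ k μ (A ∪ B) ∅ (A ∪ B) + hallE ℳ σ k μ (A ∩ B) ∅ (A ∩ B)
      ≤ hallE ℳ σ k μ A ∅ A + hallE ℳ σ k μ B ∅ B := by
  have h := condMI_nonneg μ hμ0 hμ1
    (fun ω => (rvXS (A \ B) ω, rvYhS (A \ B) ω))
    (fun ω => (rvXS (B \ A) ω, rvYhS (B \ A) ω))
    (fun ω => (rvX0 ω, rvXS ((A ∩ B) ∪ ℳ) ω, rvYS (∅ : Finset (Fin n)) ω,
      rvYhS (A ∩ B) ω, rvYk σ k ω, rvQ ω))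
  rw [condMI, congr_U1 ℳ σ k μ A B, congr_U2 ℳ σ k μ A B, congr_U3 ℳ σ k μ A B] at h
  have h4 : entropy μ (fun ω =>
      (rvX0 ω, rvXS ((A ∩ B) ∪ ℳ) ω, rvYS (∅ : Finset (Fin n)) ω,
        rvYhS (A ∩ B) ω, rvYk σ k ω, rvQ ω)) = hallE ℳ σ k μ (A ∩ B) ∅ (A ∩ B) := rfl
  rw [h4] at h
  linarith


variable (pQ : QA → ℝ) (p0 : QA → X0A → ℝ)
  (pM : QA → X0A → (∀ i : ℳ, XA i) → ℝ) (pC : ∀ i : Fin n, QA → XA i → ℝ)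
  (W : X0A → (∀ i, XA i) → ((∀ i, YA i) × YdA) → ℝ)
  (κ : ∀ i : Fin n, QA → YA i → XA i → YhA i → ℝ)

/-- `c_i`: the expected entropy of the compression kernel at relay `i`. -/
noncomputable def ccE (i : Fin n) : ℝ :=
  ∑ ω : DFOmega QA X0A XA YA YdA YhA, muDF ℳ pQ p0 pM pC W κ ω *
    ∑ a : YhA i, Real.negMulLog (κ i ω.1 (ω.2.2.2.1 i) (ω.2.2.1 i) a)

set_option synthInstance.maxSize 8192 in
set_option synthInstance.maxHeartbeats 4000000 in
lemma hallE_insertC (hκs : ∀ i q y x, ∑ yh, κ i q y x yh = 1)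
    {A B C : Finset (Fin n)} {i : Fin n} (hiA : i ∈ A) (hiB : i ∈ B) (hiC : i ∉ C) :
    hallE ℳ σ k (muDF ℳ pQ p0 pM pC W κ) A B (insert i C)
      = hallE ℳ σ k (muDF ℳ pQ p0 pM pC W κ) A B C
        + ccE ℳ pQ p0 pM pC W κ i := by
  classical
  set μD : DFOmega QA X0A XA YA YdA YhA → ℝ := muDF ℳ pQ p0 pM pC W κ with hμD
  set U : DFOmega QA X0A XA YA YdA YhA → YhA i := fun ω => ω.2.2.2.2.2 i with hU
  set Wc : DFOmega QA X0A XA YA YdA YhA →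
      X0A × ((j : (A ∪ ℳ : Finset (Fin n))) → XA j) × ((j : B) → YA j)
        × ((j : C) → YhA j) × YkType σ YA YdA k × QA :=
    fun ω => (rvX0 ω, rvXS (A ∪ ℳ) ω, rvYS B ω, rvYhS C ω, rvYk σ k ω, rvQ ω) with hWc
  have e1 : hallE ℳ σ k μD A B (insert i C)
      = entropy μD (fun ω => (U ω, Wc ω)) := by
    refine SDAux.entropy_congr μD fun ω ω' => ?_
    simp only [hallE, hWc, hU, Prod.ext_iff, rvXS_eq_iff, rvYS_eq_iff, rvYhS_eq_iff,
      rvQ, rvX0, Finset.forall_mem_union, Finset.forall_mem_insert]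
    tauto
  set ν : DFOmega QA X0A XA YA YdA YhA → ℝ := fun ω =>
    pQ ω.1 * p0 ω.1 ω.2.1 * pM ω.1 ω.2.1 (fun j => ω.2.2.1 j)
      * (∏ j ∈ ℳᶜ, pC j ω.1 (ω.2.2.1 j))
      * W ω.2.1 ω.2.2.1 (ω.2.2.2.1, ω.2.2.2.2.1)
      * ∏ j ∈ Finset.univ.erase i,
          κ j ω.1 (ω.2.2.2.1 j) (ω.2.2.1 j) (ω.2.2.2.2.2 j) with hν'
  set upd : DFOmega QA X0A XA YA YdA YhA → YhA i → DFOmega QA X0A XA YA YdA YhA :=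
    fun ω a => (ω.1, ω.2.1, ω.2.2.1, ω.2.2.2.1, ω.2.2.2.2.1,
      Function.update ω.2.2.2.2.2 i a) with hupd'
  have hker := SDAux.pmfOf_kernel μD ν U Wc
    (fun t : QA × YA i × XA i => fun a => κ i t.1 t.2.1 t.2.2 a)
    (fun w => (w.2.2.2.2.2, w.2.2.1 ⟨i, hiB⟩, w.2.1 ⟨i, Finset.mem_union_left ℳ hiA⟩))
    upd
    (fun ω a => Function.update_self i a ω.2.2.2.2.2)
    (fun ω => by
      show (ω.1, ω.2.1, ω.2.2.1, ω.2.2.2.1, ω.2.2.2.2.1,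
        Function.update ω.2.2.2.2.2 i (ω.2.2.2.2.2 i)) = ω
      rw [Function.update_eq_self])
    (fun ω a a' => by
      show (ω.1, ω.2.1, ω.2.2.1, ω.2.2.2.1, ω.2.2.2.2.1,
          Function.update (Function.update ω.2.2.2.2.2 i a) i a')
        = (ω.1, ω.2.1, ω.2.2.1, ω.2.2.2.1, ω.2.2.2.2.1,
          Function.update ω.2.2.2.2.2 i a')
      rw [Function.update_idem])
    (fun ω a => by
      have hYh : rvYhS (YhA := YhA) C (upd ω a) = rvYhS C ω := by
        funext j
        exact Function.update_of_ne (fun h : (j : Fin n) = i => hiC (h ▸ j.2)) a ω.2.2.2.2.2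
      exact congrArg (fun z => (rvX0 ω, rvXS (A ∪ ℳ) ω, rvYS B ω, z,
        rvYk σ k ω, rvQ ω)) hYh)
    (fun ω a => by
      have hprod : (∏ j ∈ Finset.univ.erase i,
          κ j ω.1 (ω.2.2.2.1 j) (ω.2.2.1 j) (Function.update ω.2.2.2.2.2 i a j))
          = ∏ j ∈ Finset.univ.erase i,
            κ j ω.1 (ω.2.2.2.1 j) (ω.2.2.1 j) (ω.2.2.2.2.2 j) :=
        Finset.prod_congr rfl fun j hj => by
          rw [Function.update_of_ne (Finset.mem_erase.mp hj).1]
      exact congrArg (fun t => pQ ω.1 * p0 ω.1 ω.2.1 * pM ω.1 ω.2.1 (fun j => ω.2.2.1 j)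
        * (∏ j ∈ ℳᶜ, pC j ω.1 (ω.2.2.1 j))
        * W ω.2.1 ω.2.2.1 (ω.2.2.2.1, ω.2.2.2.2.1) * t) hprod)
    (fun ω => by
      show μD ω = ν ω * κ i ω.1 (ω.2.2.2.1 i) (ω.2.2.1 i) (ω.2.2.2.2.2 i)
      rw [hμD, hν']
      simp only [muDF]
      rw [← Finset.prod_erase_mul Finset.univ _ (Finset.mem_univ i)]
      ring)
    (fun t => hκs i t.1 t.2.1 t.2.2)
  have e2 := SDAux.entropy_pair_kernel μD U Wc
    (fun t : QA × YA i × XA i => fun a => κ i t.1 t.2.1 t.2.2 a)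
    (fun w => (w.2.2.2.2.2, w.2.2.1 ⟨i, hiB⟩, w.2.1 ⟨i, Finset.mem_union_left ℳ hiA⟩))
    hker (fun t => hκs i t.1 t.2.1 t.2.2)
  rw [e1, e2]
  rfl


/-- Projection onto the `(Q, X₀, X)` coordinates. -/
def projX : DFOmega QA X0A XA YA YdA YhA → QA × X0A × (∀ i, XA i) :=
  fun ω => (ω.1, ω.2.1, ω.2.2.1)

/-- The marginal pmf of `(Q, X₀, X)`. -/
noncomputable def muX : QA × X0A × (∀ i, XA i) → ℝ := fun v =>
  pQ v.1 * p0 v.1 v.2.1 * pM v.1 v.2.1 (fun j => v.2.2 j)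
    * ∏ j ∈ ℳᶜ, pC j v.1 (v.2.2 j)

lemma push_muX (hWs : ∀ x0 x, ∑ y, W x0 x y = 1)
    (hκs : ∀ i q y x, ∑ yh, κ i q y x yh = 1)
    (v : QA × X0A × (∀ i, XA i)) :
    SDAux.pmfOf (muDF ℳ pQ p0 pM pC W κ) (projX (XA := XA)) v
      = muX ℳ pQ p0 pM pC v := by
  classical
  have step1 : SDAux.pmfOf (muDF ℳ pQ p0 pM pC W κ) (projX (XA := XA)) v
      = ∑ r : (∀ i, YA i) × YdA × (∀ i, YhA i),
          muDF ℳ pQ p0 pM pC W κ (v.1, v.2.1, v.2.2, r.1, r.2.1, r.2.2) := by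
    rw [SDAux.pmfOf]
    refine Finset.sum_nbij' (fun ω => (ω.2.2.2.1, ω.2.2.2.2.1, ω.2.2.2.2.2))
      (fun r => (v.1, v.2.1, v.2.2, r.1, r.2.1, r.2.2)) ?_ ?_ ?_ ?_ ?_
    · intro ω _
      exact Finset.mem_univ _
    · intro r _
      refine Finset.mem_filter.mpr ⟨Finset.mem_univ _, rfl⟩
    · intro ω hω
      obtain ⟨-, hproj⟩ := Finset.mem_filter.mp hω
      obtain ⟨h1, h2, h3⟩ : ω.1 = v.1 ∧ ω.2.1 = v.2.1 ∧ ω.2.2.1 = v.2.2 := by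
        simpa [projX, Prod.ext_iff] using hproj
      show (v.1, v.2.1, v.2.2, ω.2.2.2.1, ω.2.2.2.2.1, ω.2.2.2.2.2) = ω
      rw [← h1, ← h2, ← h3]
    · intro r _
      rfl
    · intro ω hω
      obtain ⟨-, hproj⟩ := Finset.mem_filter.mp hω
      obtain ⟨h1, h2, h3⟩ : ω.1 = v.1 ∧ ω.2.1 = v.2.1 ∧ ω.2.2.1 = v.2.2 := by
        simpa [projX, Prod.ext_iff] using hproj
      show muDF ℳ pQ p0 pM pC W κ ω
        = muDF ℳ pQ p0 pM pC W κ (v.1, v.2.1, v.2.2, ω.2.2.2.1, ω.2.2.2.2.1, ω.2.2.2.2.2)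
      rw [← h1, ← h2, ← h3]
  rw [step1]
  have hκsum : ∀ y : (∀ i, YA i), ∑ yh : (∀ i, YhA i),
      ∏ j, κ j v.1 (y j) (v.2.2 j) (yh j) = 1 := by
    intro y
    rw [← Fintype.piFinset_univ, ← Finset.prod_univ_sum]
    simp only [hκs]
    exact Finset.prod_const_one
  have expand : ∀ r : (∀ i, YA i) × YdA × (∀ i, YhA i),
      muDF ℳ pQ p0 pM pC W κ (v.1, v.2.1, v.2.2, r.1, r.2.1, r.2.2)
        = muX ℳ pQ p0 pM pC v * W v.2.1 v.2.2 (r.1, r.2.1)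
          * ∏ j, κ j v.1 (r.1 j) (v.2.2 j) (r.2.2 j) := by
    intro r
    simp only [muDF, muX]
    try ring
  simp only [expand]
  rw [Fintype.sum_prod_type]
  have inner1 : ∀ y : (∀ i, YA i), (∑ s : YdA × (∀ i, YhA i),
      muX ℳ pQ p0 pM pC v * W v.2.1 v.2.2 (y, s.1)
        * ∏ j, κ j v.1 (y j) (v.2.2 j) (s.2 j))
      = ∑ yd : YdA, muX ℳ pQ p0 pM pC v * W v.2.1 v.2.2 (y, yd) := by
    intro y
    rw [Fintype.sum_prod_type]
    refine Finset.sum_congr rfl fun yd _ => ?_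
    dsimp only
    rw [← Finset.mul_sum, hκsum y, mul_one]
  simp only [inner1]
  have inner2 : ∑ y : (∀ i, YA i), ∑ yd : YdA,
      muX ℳ pQ p0 pM pC v * W v.2.1 v.2.2 (y, yd)
      = muX ℳ pQ p0 pM pC v * ∑ p : (∀ i, YA i) × YdA, W v.2.1 v.2.2 p := by
    rw [Fintype.sum_prod_type, Finset.mul_sum]
    refine Finset.sum_congr rfl fun y _ => ?_
    rw [Finset.mul_sum]
  rw [inner2, hWs, mul_one]

lemma sum_muX (hpQs : ∑ q, pQ q = 1) (hp0s : ∀ q, ∑ x, p0 q x = 1)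
    (hpMs : ∀ q x0, ∑ xm, pM q x0 xm = 1) (hpCs : ∀ i q, ∑ x, pC i q x = 1) :
    ∑ v : QA × X0A × (∀ i, XA i), muX ℳ pQ p0 pM pC v = 1 := by
  classical
  rw [Fintype.sum_prod_type]
  have hq : ∀ q : QA, ∑ s : X0A × (∀ i, XA i), muX ℳ pQ p0 pM pC (q, s) = pQ q := by
    intro q
    rw [Fintype.sum_prod_type]
    have hx0 : ∀ x0 : X0A, ∑ x : (∀ i, XA i), muX ℳ pQ p0 pM pC (q, x0, x)
        = pQ q * p0 q x0 := by
      intro x0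
      have hxsum : ∑ x : (∀ i, XA i),
          pM q x0 (fun j => x j) * ∏ j ∈ ℳᶜ, pC j q (x j) = 1 := by
        set e := (Equiv.piEquivPiSubtypeProd (fun i => i ∈ ℳ) XA).symm with he
        rw [← Equiv.sum_comp e (fun x : (∀ i, XA i) =>
          pM q x0 (fun j => x j) * ∏ j ∈ ℳᶜ, pC j q (x j))]
        rw [Fintype.sum_prod_type]
        have hval : ∀ (u : ∀ i : {x // x ∈ ℳ}, XA i) (w : ∀ i : {x // ¬ x ∈ ℳ}, XA i),
            (pM q x0 (fun j => e (u, w) j) * ∏ j ∈ ℳᶜ, pC j q (e (u, w) j))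
            = pM q x0 u * ∏ t : {x // ¬ x ∈ ℳ}, pC t q (w t) := by
          intro u w
          have h1 : (fun j : { x // x ∈ ℳ } => e (u, w) (j : Fin n)) = u := by
            funext j
            rw [he]
            simp only [Equiv.piEquivPiSubtypeProd_symm_apply]
            exact dif_pos j.2
          have h2 : (∏ j ∈ ℳᶜ, pC j q (e (u, w) j))
              = ∏ t : {x // ¬ x ∈ ℳ}, pC t q (w t) := by
            rw [← Finset.prod_coe_sort ℳᶜ (fun j => pC j q (e (u, w) j))]
            refine Fintype.prod_equiv (Equiv.subtypeEquivRight (fun x => by simp))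
              _ _ fun j => ?_
            have hj : ¬ (j : Fin n) ∈ ℳ := Finset.mem_compl.mp j.2
            rw [he]
            simp only [Equiv.piEquivPiSubtypeProd_symm_apply]
            rw [dif_neg hj]
            rfl
          rw [h1, h2]
        simp only [hval]
        have hw : ∑ w : (∀ i : {x // ¬ x ∈ ℳ}, XA i),
            ∏ t : {x // ¬ x ∈ ℳ}, pC t q (w t) = 1 := by
          rw [← Fintype.piFinset_univ, ← Finset.prod_univ_sum]
          simp only [hpCs]
          exact Finset.prod_const_one
        rw [Finset.sum_comm]
        have : ∀ w : (∀ i : {x // ¬ x ∈ ℳ}, XA i),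
            ∑ u : (∀ i : {x // x ∈ ℳ}, XA i),
              pM q x0 u * ∏ t : {x // ¬ x ∈ ℳ}, pC t q (w t)
            = ∏ t : {x // ¬ x ∈ ℳ}, pC t q (w t) := by
          intro w
          rw [← Finset.sum_mul, hpMs, one_mul]
        simp only [this]
        exact hw
      calc ∑ x : (∀ i, XA i), muX ℳ pQ p0 pM pC (q, x0, x)
          = pQ q * p0 q x0 * ∑ x : (∀ i, XA i),
              pM q x0 (fun j => x j) * ∏ j ∈ ℳᶜ, pC j q (x j) := by
            rw [Finset.mul_sum]
            refine Finset.sum_congr rfl fun x _ => ?_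
            simp only [muX]
            ring
        _ = pQ q * p0 q x0 := by rw [hxsum, mul_one]
    simp only [hx0]
    rw [← Finset.mul_sum, hp0s, mul_one]
  simp only [hq]
  exact hpQs

lemma muDF_nonneg (hpQ : ∀ q, 0 ≤ pQ q) (hp0 : ∀ q x, 0 ≤ p0 q x)
    (hpM : ∀ q x0 xm, 0 ≤ pM q x0 xm) (hpC : ∀ i q x, 0 ≤ pC i q x)
    (hW : ∀ x0 x y, 0 ≤ W x0 x y) (hκ : ∀ i q y x yh, 0 ≤ κ i q y x yh)
    (ω : DFOmega QA X0A XA YA YdA YhA) : 0 ≤ muDF ℳ pQ p0 pM pC W κ ω := by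
  refine mul_nonneg (mul_nonneg (mul_nonneg (mul_nonneg (mul_nonneg (hpQ _) (hp0 _ _))
    (hpM _ _ _)) ?_) (hW _ _ _)) ?_
  · exact Finset.prod_nonneg fun j _ => hpC _ _ _
  · exact Finset.prod_nonneg fun j _ => hκ _ _ _ _ _

lemma sum_muDF (hpQs : ∑ q, pQ q = 1) (hp0s : ∀ q, ∑ x, p0 q x = 1)
    (hpMs : ∀ q x0, ∑ xm, pM q x0 xm = 1) (hpCs : ∀ i q, ∑ x, pC i q x = 1)
    (hWs : ∀ x0 x, ∑ y, W x0 x y = 1) (hκs : ∀ i q y x, ∑ yh, κ i q y x yh = 1) :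
    ∑ ω : DFOmega QA X0A XA YA YdA YhA, muDF ℳ pQ p0 pM pC W κ ω = 1 := by
  classical
  rw [← SDAux.sum_pmfOf (muDF ℳ pQ p0 pM pC W κ) (projX (XA := XA))]
  rw [Finset.sum_congr rfl fun v _ => push_muX ℳ pQ p0 pM pC W κ hWs hκs v]
  exact sum_muX ℳ pQ p0 pM pC hpQs hp0s hpMs hpCs


lemma restr_eq_iff {S : Finset (Fin n)} {x x' : ∀ i, XA i} :
    (fun j : S => x j) = (fun j : S => x' j) ↔ ∀ j ∈ S, x j = x' j := by
  constructor
  · intro h j hj; exact congrFun h ⟨j, hj⟩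
  · intro h; funext j; exact h j j.2

/-- `a_i = H(X_i | Q)` as an integral of the channel-input kernel entropy. -/
noncomputable def aaE (i : Fin n) : ℝ :=
  ∑ v : QA × X0A × (∀ j, XA j), muX ℳ pQ p0 pM pC v
    * ∑ x : XA i, Real.negMulLog (pC i v.1 x)

lemma hXE_pushed (hWs : ∀ x0 x, ∑ y, W x0 x y = 1)
    (hκs : ∀ i q y x, ∑ yh, κ i q y x yh = 1) (A : Finset (Fin n)) :
    hXE ℳ (muDF ℳ pQ p0 pM pC W κ) A
      = entropy (muX ℳ pQ p0 pM pC)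
          (fun v => (v.2.1, (fun j : (A ∪ ℳ : Finset (Fin n)) => v.2.2 j), v.1)) := by
  classical
  exact SDAux.entropy_comp (muDF ℳ pQ p0 pM pC W κ) (projX (XA := XA))
    (muX ℳ pQ p0 pM pC) (push_muX ℳ pQ p0 pM pC W κ hWs hκs)
    (fun v => (v.2.1, (fun j : (A ∪ ℳ : Finset (Fin n)) => v.2.2 j), v.1))

lemma hXE_insert (hWs : ∀ x0 x, ∑ y, W x0 x y = 1)
    (hκs : ∀ i q y x, ∑ yh, κ i q y x yh = 1)
    (hpCs : ∀ i q, ∑ x, pC i q x = 1)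
    {A : Finset (Fin n)} {i : Fin n} (hiM : i ∉ ℳ) (hiA : i ∉ A) :
    hXE ℳ (muDF ℳ pQ p0 pM pC W κ) (insert i A)
      = hXE ℳ (muDF ℳ pQ p0 pM pC W κ) A + aaE ℳ pQ p0 pM pC i := by
  classical
  set μ2 : QA × X0A × (∀ j, XA j) → ℝ := muX ℳ pQ p0 pM pC with hμ2
  set U2 : QA × X0A × (∀ j, XA j) → XA i := fun v => v.2.2 i with hU2
  set Wx : QA × X0A × (∀ j, XA j) →
      X0A × ((j : (A ∪ ℳ : Finset (Fin n))) → XA j) × QA :=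
    fun v => (v.2.1, (fun j : (A ∪ ℳ : Finset (Fin n)) => v.2.2 j), v.1) with hWx
  have hiAM : i ∉ A ∪ ℳ := by
    simp only [Finset.mem_union]
    tauto
  have e1 : hXE ℳ (muDF ℳ pQ p0 pM pC W κ) (insert i A)
      = entropy μ2 (fun v => (U2 v, Wx v)) := by
    rw [hXE_pushed ℳ pQ p0 pM pC W κ hWs hκs]
    refine SDAux.entropy_congr μ2 fun v v' => ?_
    simp only [hWx, hU2, Prod.ext_iff, restr_eq_iff, Finset.insert_union,
      Finset.forall_mem_insert]
    tauto
  set ν2 : QA × X0A × (∀ j, XA j) → ℝ := fun v =>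
    pQ v.1 * p0 v.1 v.2.1 * pM v.1 v.2.1 (fun j => v.2.2 j)
      * ∏ j ∈ ℳᶜ.erase i, pC j v.1 (v.2.2 j) with hν2
  set upd2 : (QA × X0A × (∀ j, XA j)) → XA i → QA × X0A × (∀ j, XA j) :=
    fun v a => (v.1, v.2.1, Function.update v.2.2 i a) with hupd2
  have hker := SDAux.pmfOf_kernel μ2 ν2 U2 Wx (fun q a => pC i q a)
    (fun w => w.2.2) upd2
    (fun v a => Function.update_self i a v.2.2)
    (fun v => by
      show (v.1, v.2.1, Function.update v.2.2 i (v.2.2 i)) = v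
      rw [Function.update_eq_self])
    (fun v a a' => by
      show (v.1, v.2.1, Function.update (Function.update v.2.2 i a) i a')
        = (v.1, v.2.1, Function.update v.2.2 i a')
      rw [Function.update_idem])
    (fun v a => by
      have hx : (fun j : (A ∪ ℳ : Finset (Fin n)) => Function.update v.2.2 i a j)
          = fun j : (A ∪ ℳ : Finset (Fin n)) => v.2.2 j := by
        funext j
        exact Function.update_of_ne (fun h : (j : Fin n) = i => hiAM (h ▸ j.2)) a v.2.2
      exact congrArg (fun z => (v.2.1, z, v.1)) hx)
    (fun v a => by
      have hM : (fun j : {x // x ∈ ℳ} => Function.update v.2.2 i a (j : Fin n))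
          = fun j : {x // x ∈ ℳ} => v.2.2 (j : Fin n) := by
        funext j
        exact Function.update_of_ne (fun h : (j : Fin n) = i => hiM (h ▸ j.2)) a v.2.2
      have hP : (∏ j ∈ ℳᶜ.erase i, pC j v.1 (Function.update v.2.2 i a j))
          = ∏ j ∈ ℳᶜ.erase i, pC j v.1 (v.2.2 j) :=
        Finset.prod_congr rfl fun j hj => by
          rw [Function.update_of_ne (Finset.mem_erase.mp hj).1]
      show pQ v.1 * p0 v.1 v.2.1 * pM v.1 v.2.1 (fun j => Function.update v.2.2 i a j)
          * ∏ j ∈ ℳᶜ.erase i, pC j v.1 (Function.update v.2.2 i a j) = ν2 v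
      rw [hν2, hM, hP])
    (fun v => by
      show μ2 v = ν2 v * pC i v.1 (v.2.2 i)
      rw [hμ2, hν2]
      simp only [muX]
      rw [← Finset.prod_erase_mul ℳᶜ _ (Finset.mem_compl.mpr hiM)]
      ring)
    (fun q => hpCs i q)
  have e2 := SDAux.entropy_pair_kernel μ2 U2 Wx (fun q a => pC i q a)
    (fun w => w.2.2) hker (fun q => hpCs i q)
  rw [e1, e2, ← hXE_pushed ℳ pQ p0 pM pC W κ hWs hκs A]
  rfl


lemma hXE_sum (hWs : ∀ x0 x, ∑ y, W x0 x y = 1)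
    (hκs : ∀ i q y x, ∑ yh, κ i q y x yh = 1)
    (hpCs : ∀ i q, ∑ x, pC i q x = 1) :
    ∀ T : Finset (Fin n), T ⊆ ℳᶜ →
      hXE ℳ (muDF ℳ pQ p0 pM pC W κ) T
        = hXE ℳ (muDF ℳ pQ p0 pM pC W κ) ∅ + ∑ i ∈ T, aaE ℳ pQ p0 pM pC i := by
  intro T
  induction T using Finset.induction_on with
  | empty => simp
  | @insert i T hiT ih =>
    intro hsub
    have hiM : i ∉ ℳ := Finset.mem_compl.mp (hsub (Finset.mem_insert_self i T))
    rw [hXE_insert ℳ pQ p0 pM pC W κ hWs hκs hpCs hiM hiT,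
      ih (fun j hj => hsub (Finset.mem_insert_of_mem hj)), Finset.sum_insert hiT]
    ring

lemma hallE_peel (hκs : ∀ i q y x, ∑ yh, κ i q y x yh = 1)
    {D S : Finset (Fin n)} (hS : S ⊆ D) :
    ∀ C' : Finset (Fin n), C' ⊆ S →
      hallE ℳ σ k (muDF ℳ pQ p0 pM pC W κ) D S (D \ S ∪ C')
        = hallE ℳ σ k (muDF ℳ pQ p0 pM pC W κ) D S (D \ S)
          + ∑ i ∈ C', ccE ℳ pQ p0 pM pC W κ i := by
  intro C'
  induction C' using Finset.induction_on with
  | empty => simp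
  | @insert j C'' hjC ih =>
    intro hsub
    have hjS : j ∈ S := hsub (Finset.mem_insert_self j C'')
    have hjD : j ∈ D := hS hjS
    have hjnot : j ∉ D \ S ∪ C'' := by
      simp only [Finset.mem_union, Finset.mem_sdiff]
      tauto
    rw [Finset.union_insert,
      hallE_insertC ℳ σ k pQ p0 pM pC W κ hκs hjD hjS hjnot,
      ih (fun t ht => hsub (Finset.mem_insert_of_mem ht)), Finset.sum_insert hjC]
    ring

/-- The potential function `Φ`. -/
noncomputable def PhiE (T : Finset (Fin n)) : ℝ :=
  (∑ i ∈ T, (aaE ℳ pQ p0 pM pC i + ccE ℳ pQ p0 pM pC W κ i))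
    - hallE ℳ σ k (muDF ℳ pQ p0 pM pC W κ) T ∅ T

lemma G_eq (hWs : ∀ x0 x, ∑ y, W x0 x y = 1)
    (hκs : ∀ i q y x, ∑ yh, κ i q y x yh = 1)
    (hpCs : ∀ i q, ∑ x, pC i q x = 1)
    {D S : Finset (Fin n)} (hD : D ⊆ ℳᶜ) (hS : S ⊆ D) :
    condMI (muDF ℳ pQ p0 pM pC W κ) (rvXS S)
        (fun ω => (rvYhS (D \ S) ω, rvYk σ k ω))
        (fun ω => ((rvX0 ω, rvXS ℳ ω), rvXS (D \ S) ω, rvQ ω))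
      - condMI (muDF ℳ pQ p0 pM pC W κ) (rvYS S) (rvYhS S)
        (fun ω => ((rvX0 ω, rvXS ℳ ω), rvXS D ω, rvYk σ k ω, rvYhS (D \ S) ω, rvQ ω))
      = PhiE ℳ σ k pQ p0 pM pC W κ D - PhiE ℳ σ k pQ p0 pM pC W κ (D \ S) := by
  classical
  set μD : DFOmega QA X0A XA YA YdA YhA → ℝ := muDF ℳ pQ p0 pM pC W κ with hμD
  rw [condMI, condMI]
  rw [congr_T1 ℳ μD hS, congr_T2 ℳ σ k μD D S, congr_T3 ℳ σ k μD hS,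
    congr_T4 ℳ μD D S, congr_T5 ℳ σ k μD D S, congr_T6 ℳ σ k μD hS,
    congr_T7 ℳ σ k μD hS, congr_T8 ℳ σ k μD D S]
  have hXs := hXE_sum ℳ pQ p0 pM pC W κ hWs hκs hpCs
  have h1 : hXE ℳ μD D = hXE ℳ μD (D \ S) + ∑ i ∈ S, aaE ℳ pQ p0 pM pC i := by
    rw [hμD, hXs D hD, hXs (D \ S) (fun j hj => hD (Finset.mem_sdiff.mp hj).1)]
    rw [← Finset.sum_sdiff hS]
    ring
  have h2 : hallE ℳ σ k μD D S D
      = hallE ℳ σ k μD D S (D \ S) + ∑ i ∈ S, ccE ℳ pQ p0 pM pC W κ i := by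
    have := hallE_peel ℳ σ k pQ p0 pM pC W κ hκs hS S (subset_refl S)
    rw [Finset.sdiff_union_of_subset hS] at this
    rw [hμD]
    exact this
  have h3 : ∑ i ∈ D, (aaE ℳ pQ p0 pM pC i + ccE ℳ pQ p0 pM pC W κ i)
      = ∑ i ∈ D \ S, (aaE ℳ pQ p0 pM pC i + ccE ℳ pQ p0 pM pC W κ i)
        + ∑ i ∈ S, (aaE ℳ pQ p0 pM pC i + ccE ℳ pQ p0 pM pC W κ i) :=
    (Finset.sum_sdiff hS).symm
  have h4 : ∑ i ∈ S, (aaE ℳ pQ p0 pM pC i + ccE ℳ pQ p0 pM pC W κ i)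
      = (∑ i ∈ S, aaE ℳ pQ p0 pM pC i) + ∑ i ∈ S, ccE ℳ pQ p0 pM pC W κ i :=
    Finset.sum_add_distrib
  rw [PhiE, PhiE, h1, h2, h3, h4]
  ring

lemma selfDecodable_iff (hWs : ∀ x0 x, ∑ y, W x0 x y = 1)
    (hκs : ∀ i q y x, ∑ yh, κ i q y x yh = 1)
    (hpCs : ∀ i q, ∑ x, pC i q x = 1)
    {D : Finset (Fin n)} (hD : D ⊆ ℳᶜ) :
    SelfDecodable ℳ σ (muDF ℳ pQ p0 pM pC W κ) k D
      ↔ ∀ T ⊆ D, T ≠ D → PhiE ℳ σ k pQ p0 pM pC W κ T < PhiE ℳ σ k pQ p0 pM pC W κ D := by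
  constructor
  · intro hSD T hT hne
    have hS : D \ T ⊆ D := Finset.sdiff_subset
    have hne' : (D \ T).Nonempty := by
      rw [Finset.sdiff_nonempty]
      exact fun h => hne (subset_antisymm hT h)
    have h0 := hSD (D \ T) hS hne'
    rw [G_eq ℳ σ k pQ p0 pM pC W κ hWs hκs hpCs hD hS,
      Finset.sdiff_sdiff_eq_self hT] at h0
    linarith
  · intro h S hS hne
    have hG := G_eq ℳ σ k pQ p0 pM pC W κ hWs hκs hpCs hD hS
    rw [hG]
    have hTsub : D \ S ⊆ D := Finset.sdiff_subset
    have hTne : D \ S ≠ D := by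
      intro hEq
      obtain ⟨i, hi⟩ := hne
      have : i ∈ D \ S := by rw [hEq]; exact hS hi
      exact (Finset.mem_sdiff.mp this).2 hi
    have := h (D \ S) hTsub hTne
    linarith


lemma PhiE_supermod (hμ0 : ∀ ω, 0 ≤ muDF ℳ pQ p0 pM pC W κ ω)
    (hμ1 : ∑ ω, muDF ℳ pQ p0 pM pC W κ ω = 1) (A B : Finset (Fin n)) :
    PhiE ℳ σ k pQ p0 pM pC W κ A + PhiE ℳ σ k pQ p0 pM pC W κ B
      ≤ PhiE ℳ σ k pQ p0 pM pC W κ (A ∪ B) + PhiE ℳ σ k pQ p0 pM pC W κ (A ∩ B) := by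
  have hsub := psi_submod ℳ σ k (muDF ℳ pQ p0 pM pC W κ) hμ0 hμ1 A B
  have hmod : ∑ i ∈ A ∪ B, (aaE ℳ pQ p0 pM pC i + ccE ℳ pQ p0 pM pC W κ i)
      + ∑ i ∈ A ∩ B, (aaE ℳ pQ p0 pM pC i + ccE ℳ pQ p0 pM pC W κ i)
      = ∑ i ∈ A, (aaE ℳ pQ p0 pM pC i + ccE ℳ pQ p0 pM pC W κ i)
        + ∑ i ∈ B, (aaE ℳ pQ p0 pM pC i + ccE ℳ pQ p0 pM pC W κ i) :=
    Finset.sum_union_inter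
  simp only [PhiE]
  linarith

lemma sd_union (hWs : ∀ x0 x, ∑ y, W x0 x y = 1)
    (hκs : ∀ i q y x, ∑ yh, κ i q y x yh = 1)
    (hpCs : ∀ i q, ∑ x, pC i q x = 1)
    (hμ0 : ∀ ω, 0 ≤ muDF ℳ pQ p0 pM pC W κ ω)
    (hμ1 : ∑ ω, muDF ℳ pQ p0 pM pC W κ ω = 1)
    {A B : Finset (Fin n)} (hA : A ⊆ ℳᶜ) (hB : B ⊆ ℳᶜ)
    (sdA : SelfDecodable ℳ σ (muDF ℳ pQ p0 pM pC W κ) k A)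
    (sdB : SelfDecodable ℳ σ (muDF ℳ pQ p0 pM pC W κ) k B) :
    SelfDecodable ℳ σ (muDF ℳ pQ p0 pM pC W κ) k (A ∪ B) := by
  classical
  set Φ : Finset (Fin n) → ℝ := PhiE ℳ σ k pQ p0 pM pC W κ with hΦ
  have hAB : A ∪ B ⊆ ℳᶜ := Finset.union_subset hA hB
  rw [selfDecodable_iff ℳ σ k pQ p0 pM pC W κ hWs hκs hpCs hAB]
  rw [selfDecodable_iff ℳ σ k pQ p0 pM pC W κ hWs hκs hpCs hA] at sdA
  rw [selfDecodable_iff ℳ σ k pQ p0 pM pC W κ hWs hκs hpCs hB] at sdB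
  have hleA : ∀ T ⊆ A, Φ T ≤ Φ A := by
    intro T hT
    rcases eq_or_ne T A with rfl | hne
    · exact le_refl _
    · exact le_of_lt (sdA T hT hne)
  have hleB : ∀ T ⊆ B, Φ T ≤ Φ B := by
    intro T hT
    rcases eq_or_ne T B with rfl | hne
    · exact le_refl _
    · exact le_of_lt (sdB T hT hne)
  have hsup := PhiE_supermod ℳ σ k pQ p0 pM pC W κ hμ0 hμ1
  intro T hT hne
  by_cases hAT : A ⊆ T
  · have h1 := hsup T B
    have hTB : T ∪ B = A ∪ B := by
      apply subset_antisymm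
      · exact Finset.union_subset hT Finset.subset_union_right
      · exact Finset.union_subset (hAT.trans Finset.subset_union_left)
          Finset.subset_union_right
    have hTBi : T ∩ B ⊆ B := Finset.inter_subset_right
    have hTBne : T ∩ B ≠ B := by
      intro hEq
      apply hne
      apply subset_antisymm hT
      have hBT : B ⊆ T := by
        intro b hb
        have : b ∈ T ∩ B := by rw [hEq]; exact hb
        exact (Finset.mem_inter.mp this).1
      exact Finset.union_subset hAT hBT
    have h2 : Φ (T ∩ B) < Φ B := sdB (T ∩ B) hTBi hTBne
    rw [hTB] at h1
    linarith
  · have hTAi : T ∩ A ⊆ A := Finset.inter_subset_right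
    have hTAne : T ∩ A ≠ A := by
      intro hEq
      apply hAT
      intro a ha
      have : a ∈ T ∩ A := by rw [hEq]; exact ha
      exact (Finset.mem_inter.mp this).1
    have h2 : Φ (T ∩ A) < Φ A := sdA (T ∩ A) hTAi hTAne
    have h1 := hsup T A
    have h3 : Φ T < Φ (T ∪ A) := by linarith
    have h4 := hsup (T ∪ A) B
    have hTAB : T ∪ A ∪ B = A ∪ B := by
      apply subset_antisymm
      · exact Finset.union_subset (Finset.union_subset hT Finset.subset_union_left)
          Finset.subset_union_right
      · refine Finset.union_subset ?_ Finset.subset_union_right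
        intro a ha
        exact Finset.mem_union_left B (Finset.mem_union_right T ha)
    have h5 : Φ ((T ∪ A) ∩ B) ≤ Φ B := hleB _ Finset.inter_subset_right
    rw [hTAB] at h4
    linarith

end SDMain



/-- For each `k ∈ {2,…,M+2}` (encoded as `k : Fin (Mc+1)`), among
all subsets of `N∖M` that are self-decodable at node `π(k)` there is a unique largest
one: there exists `D_k ⊆ N∖M` self-decodable at node `π(k)` containing every subset
of `N∖M` that is self-decodable at node `π(k)`. -/
theorem exists_largest_selfDecodable
    {n Mc : ℕ} {QA X0A YdA : Type} {XA YA YhA : Fin n → Type}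
    [Fintype QA] [DecidableEq QA] [Fintype X0A] [DecidableEq X0A]
    [Fintype YdA] [DecidableEq YdA]
    [∀ i, Fintype (XA i)] [∀ i, DecidableEq (XA i)]
    [∀ i, Fintype (YA i)] [∀ i, DecidableEq (YA i)]
    [∀ i, Fintype (YhA i)] [∀ i, DecidableEq (YhA i)]
    (ℳ : Finset (Fin n)) (hMcard : ℳ.card = Mc)
    (σ : Fin Mc → Fin n) (hσinj : Function.Injective σ)
    (hσmem : ∀ j, σ j ∈ ℳ) (hσsurj : ∀ i ∈ ℳ, ∃ j, σ j = i)
    (pQ : QA → ℝ) (p0 : QA → X0A → ℝ)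
    (pM : QA → X0A → (∀ i : ℳ, XA i) → ℝ) (pC : ∀ i : Fin n, QA → XA i → ℝ)
    (W : X0A → (∀ i, XA i) → ((∀ i, YA i) × YdA) → ℝ)
    (κ : ∀ i : Fin n, QA → YA i → XA i → YhA i → ℝ)
    (hpQ : ∀ q, 0 ≤ pQ q) (hpQs : ∑ q, pQ q = 1)
    (hp0 : ∀ q x, 0 ≤ p0 q x) (hp0s : ∀ q, ∑ x, p0 q x = 1)
    (hpM : ∀ q x0 xm, 0 ≤ pM q x0 xm) (hpMs : ∀ q x0, ∑ xm, pM q x0 xm = 1)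
    (hpC : ∀ i q x, 0 ≤ pC i q x) (hpCs : ∀ i q, ∑ x, pC i q x = 1)
    (hW : ∀ x0 x y, 0 ≤ W x0 x y) (hWs : ∀ x0 x, ∑ y, W x0 x y = 1)
    (hκ : ∀ i q y x yh, 0 ≤ κ i q y x yh) (hκs : ∀ i q y x, ∑ yh, κ i q y x yh = 1)
    (k : Fin (Mc + 1)) :
    ∃ Dk : Finset (Fin n), Dk ⊆ ℳᶜ ∧
      SelfDecodable ℳ σ (muDF ℳ pQ p0 pM pC W κ) k Dk ∧
      ∀ E ⊆ ℳᶜ, SelfDecodable ℳ σ (muDF ℳ pQ p0 pM pC W κ) k E → E ⊆ Dk := by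
  
  classical
  have hμ0 := muDF_nonneg ℳ pQ p0 pM pC W κ hpQ hp0 hpM hpC hW hκ
  have hμ1 := sum_muDF ℳ pQ p0 pM pC W κ hpQs hp0s hpMs hpCs hWs hκs
  set fam : Finset (Finset (Fin n)) :=
    ℳᶜ.powerset.filter (fun E => SelfDecodable ℳ σ (muDF ℳ pQ p0 pM pC W κ) k E)
    with hfam
  set Dk : Finset (Fin n) := fam.sup id with hDk
  have hP : Dk ⊆ ℳᶜ ∧ SelfDecodable ℳ σ (muDF ℳ pQ p0 pM pC W κ) k Dk := by
    rw [hDk]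
    refine Finset.sup_induction
      (p := fun s => s ⊆ ℳᶜ ∧ SelfDecodable ℳ σ (muDF ℳ pQ p0 pM pC W κ) k s)
      ?_ ?_ ?_
    · constructor
      · show (⊥ : Finset (Fin n)) ⊆ ℳᶜ
        exact Finset.empty_subset _
      · intro S hS hne
        exact absurd (Finset.subset_empty.mp hS) hne.ne_empty
    · rintro a ⟨ha1, ha2⟩ b ⟨hb1, hb2⟩
      rw [Finset.sup_eq_union]
      exact ⟨Finset.union_subset ha1 hb1,
        sd_union ℳ σ k pQ p0 pM pC W κ hWs hκs hpCs hμ0 hμ1 ha1 hb1 ha2 hb2⟩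
    · intro E hE
      obtain ⟨h1, h2⟩ := Finset.mem_filter.mp hE
      exact ⟨Finset.mem_powerset.mp h1, h2⟩
  refine ⟨Dk, hP.1, hP.2, fun E hE hsd => ?_⟩
  exact Finset.le_sup (f := id)
    (Finset.mem_filter.mpr ⟨Finset.mem_powerset.mpr hE, hsd⟩)
end

section
/- For the single-relay channel, the joint compression-message decoding rate equals the successive compression-message decoding rate: the supremum over all distributions p(x_0)p(x_1)p(ŷ_1|y_1,x_1) of [ I(X_0; Ŷ_1, Y_2 | X_1) − max{0, I(Y_1; Ŷ_1 | X_1, Y_2) − I(X_1; Y_2)} ] equals the supremum, over all such distributions additionally satisfying I(Y_1; Ŷ_1 | X_1, Y_2) ≤ I(X_1; Y_2), of I(X_0; Ŷ_1, Y_2 | X_1). -/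
set_option linter.unusedSectionVars false
set_option maxHeartbeats 1000000

open scoped BigOperators

/-- (Unconditional) mutual information `I(X;Y)`. -/
noncomputable def mutualInfo {Ω α β : Type*} [Fintype Ω]
    [Fintype α] [DecidableEq α] [Fintype β] [DecidableEq β]
    (μ : Ω → ℝ) (X : Ω → α) (Y : Ω → β) : ℝ :=
  condMI μ X Y (fun _ => (() : Unit))

section SingleRelay

/- Alphabets of `X₀, X₁, Y₁, Y₂, Ŷ₁`. -/
variable {X0A X1A Y1A Y2A Yh1A : Type}
  [Fintype X0A] [DecidableEq X0A] [Fintype X1A] [DecidableEq X1A]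
  [Fintype Y1A] [DecidableEq Y1A] [Fintype Y2A] [DecidableEq Y2A]
  [Fintype Yh1A] [DecidableEq Yh1A]

/-- The joint pmf of `(X₀, X₁, Y₁, Y₂, Ŷ₁)`:
`p(x₀)p(x₁)p(y₁,y₂|x₀,x₁)p(ŷ₁|y₁,x₁)`. -/
noncomputable def muSR (p0 : X0A → ℝ) (p1 : X1A → ℝ)
    (W : X0A → X1A → Y1A × Y2A → ℝ) (κ : Y1A → X1A → Yh1A → ℝ) :
    X0A × X1A × Y1A × Y2A × Yh1A → ℝ :=
  fun ω => p0 ω.1 * p1 ω.2.1 * W ω.1 ω.2.1 (ω.2.2.1, ω.2.2.2.1)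
    * κ ω.2.2.1 ω.2.1 ω.2.2.2.2

variable (X0A X1A Y1A Y2A Yh1A) in
/-- `X₀`. -/
def srX0 : X0A × X1A × Y1A × Y2A × Yh1A → X0A := fun ω => ω.1

variable (X0A X1A Y1A Y2A Yh1A) in
/-- `X₁`. -/
def srX1 : X0A × X1A × Y1A × Y2A × Yh1A → X1A := fun ω => ω.2.1

variable (X0A X1A Y1A Y2A Yh1A) in
/-- `Y₁`. -/
def srY1 : X0A × X1A × Y1A × Y2A × Yh1A → Y1A := fun ω => ω.2.2.1

variable (X0A X1A Y1A Y2A Yh1A) in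
/-- `Y₂`. -/
def srY2 : X0A × X1A × Y1A × Y2A × Yh1A → Y2A := fun ω => ω.2.2.2.1

variable (X0A X1A Y1A Y2A Yh1A) in
/-- `Ŷ₁`. -/
def srYh1 : X0A × X1A × Y1A × Y2A × Yh1A → Yh1A := fun ω => ω.2.2.2.2

end SingleRelay

/-! ### Auxiliary general lemmas -/

open Finset

section Aux

/-- Pushforward probability. -/
noncomputable def pushf {Ω α : Type*} [Fintype Ω] [DecidableEq α]
    (μ : Ω → ℝ) (X : Ω → α) (a : α) : ℝ :=
  ∑ ω ∈ Finset.univ.filter (fun ω => X ω = a), μ ω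

variable {Ω α β γ : Type*} [Fintype Ω] [Fintype α] [DecidableEq α] [Fintype β] [DecidableEq β]
  [Fintype γ] [DecidableEq γ]

lemma entropy_eq (μ : Ω → ℝ) (X : Ω → α) :
    entropy μ X = ∑ a : α, Real.negMulLog (pushf μ X a) := rfl

lemma pushf_nonneg {μ : Ω → ℝ} (hμ : ∀ ω, 0 ≤ μ ω) (X : Ω → α) (a : α) :
    0 ≤ pushf μ X a :=
  Finset.sum_nonneg fun ω _ => hμ ω

lemma sum_pushf (μ : Ω → ℝ) (X : Ω → α) : ∑ a, pushf μ X a = ∑ ω, μ ω :=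
  Finset.sum_fiberwise _ _ _

lemma pushf_le_one {μ : Ω → ℝ} (hμ : ∀ ω, 0 ≤ μ ω) (hμ1 : ∑ ω, μ ω = 1)
    (X : Ω → α) (a : α) : pushf μ X a ≤ 1 := by
  rw [← hμ1]
  exact Finset.sum_le_sum_of_subset_of_nonneg (Finset.filter_subset _ _)
    (fun ω _ _ => hμ ω)

lemma pushf_comp (μ : Ω → ℝ) (X : Ω → α) (g : α → β) (b : β) :
    pushf μ (fun ω => g (X ω)) b = ∑ a ∈ Finset.univ.filter (fun a => g a = b), pushf μ X a := by
  unfold pushf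
  rw [Finset.sum_fiberwise_eq_sum_filter]
  apply Finset.sum_congr
  · ext ω; simp
  · intros; rfl

lemma entropy_comp_inj (μ : Ω → ℝ) (X : Ω → α) (Y : Ω → β) (f : α → β)
    (hf : Function.Injective f) (hXY : ∀ ω, Y ω = f (X ω)) :
    entropy μ Y = entropy μ X := by
  rw [entropy_eq, entropy_eq]
  have h1 : ∀ b, pushf μ Y b = ∑ a ∈ Finset.univ.filter (fun a => f a = b), pushf μ X a := by
    intro b
    rw [← pushf_comp μ X f b]
    unfold pushf
    apply Finset.sum_congr
    · ext ω; simp [hXY ω]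
    · intros; rfl
  rw [← Finset.sum_subset (Finset.subset_univ ((Finset.univ : Finset α).image f))]
  · rw [Finset.sum_image (fun a _ a' _ h => hf h)]
    apply Finset.sum_congr rfl
    intro a _
    rw [h1 (f a)]
    have : Finset.univ.filter (fun a' => f a' = f a) = {a} := by
      ext a'; simp [hf.eq_iff]
    rw [this, Finset.sum_singleton]
  · intro b _ hb
    rw [h1 b]
    have : Finset.univ.filter (fun a => f a = b) = ∅ := by
      ext a; simp only [Finset.mem_filter, Finset.mem_univ, true_and, Finset.notMem_empty,
        iff_false]
      intro h; exact hb (by simp [← h])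
    simp [this]

lemma entropy_congr_pf {Ω' : Type*} [Fintype Ω'] (μ : Ω → ℝ) (μ' : Ω' → ℝ)
    (X : Ω → α) (X' : Ω' → α) (h : ∀ a, pushf μ X a = pushf μ' X' a) :
    entropy μ X = entropy μ' X' := by
  rw [entropy_eq, entropy_eq]
  exact Finset.sum_congr rfl fun a _ => by rw [h a]

lemma pushf_congr_ae {μ : Ω → ℝ} {X X' : Ω → α} (h : ∀ ω, μ ω ≠ 0 → X ω = X' ω) (a : α) :
    pushf μ X a = pushf μ X' a := by
  unfold pushf
  rw [Finset.sum_filter, Finset.sum_filter]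
  apply Finset.sum_congr rfl
  intro ω _
  by_cases hμ : μ ω = 0
  · simp [hμ]
  · rw [h ω hμ]

lemma entropy_congr_ae {μ : Ω → ℝ} {X X' : Ω → α} (h : ∀ ω, μ ω ≠ 0 → X ω = X' ω) :
    entropy μ X = entropy μ X' :=
  entropy_congr_pf μ μ X X' (fun a => pushf_congr_ae h a)

lemma entropy_nonneg {μ : Ω → ℝ} (hμ : ∀ ω, 0 ≤ μ ω) (hμ1 : ∑ ω, μ ω = 1) (X : Ω → α) :
    0 ≤ entropy μ X := by
  rw [entropy_eq]
  exact Finset.sum_nonneg fun a _ =>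
    Real.negMulLog_nonneg (pushf_nonneg hμ X a) (pushf_le_one hμ hμ1 X a)

lemma negMulLog_le_inv_e {x : ℝ} (hx : 0 ≤ x) : Real.negMulLog x ≤ (Real.exp 1)⁻¹ := by
  rcases eq_or_lt_of_le hx with h | h
  · simp [← h]
    positivity
  · have hpos : 0 < (Real.exp 1 * x)⁻¹ := by positivity
    have := Real.log_le_sub_one_of_pos hpos
    rw [Real.log_inv, Real.log_mul (Real.exp_ne_zero 1) (ne_of_gt h), Real.log_exp] at this
    have h2 : -Real.log x ≤ (Real.exp 1 * x)⁻¹ := by linarith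
    have h3 : x * (-Real.log x) ≤ x * (Real.exp 1 * x)⁻¹ :=
      mul_le_mul_of_nonneg_left h2 hx
    rw [mul_inv, ← mul_assoc, mul_comm x (Real.exp 1)⁻¹, mul_assoc,
      mul_inv_cancel₀ (ne_of_gt h), mul_one] at h3
    calc Real.negMulLog x = x * (-Real.log x) := by unfold Real.negMulLog; ring
    _ ≤ (Real.exp 1)⁻¹ := h3

lemma entropy_le_card {μ : Ω → ℝ} (hμ : ∀ ω, 0 ≤ μ ω) (X : Ω → α) :
    entropy μ X ≤ (Fintype.card α : ℝ) * (Real.exp 1)⁻¹ := by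
  rw [entropy_eq]
  calc ∑ a : α, Real.negMulLog (pushf μ X a) ≤ ∑ _a : α, (Real.exp 1)⁻¹ :=
        Finset.sum_le_sum fun a _ => negMulLog_le_inv_e (pushf_nonneg hμ X a)
    _ = (Fintype.card α : ℝ) * (Real.exp 1)⁻¹ := by
        rw [Finset.sum_const, Finset.card_univ, nsmul_eq_mul]

lemma sum_rot {α β γ : Type*} [Fintype α] [Fintype β] [Fintype γ] (f : α → β → γ → ℝ) :
    ∑ a, ∑ b, ∑ c, f a b c = ∑ c, ∑ a, ∑ b, f a b c := by
  rw [show (∑ a, ∑ b, ∑ c, f a b c) = ∑ a, ∑ c, ∑ b, f a b c from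
    Finset.sum_congr rfl fun a _ => Finset.sum_comm]
  exact Finset.sum_comm

lemma sum_rot2 {α β γ : Type*} [Fintype α] [Fintype β] [Fintype γ] (f : α → β → γ → ℝ) :
    ∑ a, ∑ b, ∑ c, f a b c = ∑ b, ∑ c, ∑ a, f a b c :=
  (sum_rot f).trans (sum_rot fun c a b => f a b c)

end Aux

section Key2
variable {α β γ : Type*} [Fintype α] [Fintype β] [Fintype γ]
lemma key_ineq (q : α → β → γ → ℝ) (hq : ∀ a b c, 0 ≤ q a b c)
    (hq1 : ∑ a, ∑ b, ∑ c, q a b c = 1) :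
    ∑ a, ∑ b, ∑ c, Real.negMulLog (q a b c)
      + ∑ c, Real.negMulLog (∑ a, ∑ b, q a b c)
    ≤ ∑ a, ∑ c, Real.negMulLog (∑ b, q a b c)
      + ∑ b, ∑ c, Real.negMulLog (∑ a, q a b c) := by
  set pxz : α → γ → ℝ := fun a c => ∑ b, q a b c with hpxz
  set pyz : β → γ → ℝ := fun b c => ∑ a, q a b c with hpyz
  set pz : γ → ℝ := fun c => ∑ a, ∑ b, q a b c with hpz
  have hpxz0 : ∀ a c, 0 ≤ pxz a c := fun a c => Finset.sum_nonneg fun b _ => hq a b c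
  have hpyz0 : ∀ b c, 0 ≤ pyz b c := fun b c => Finset.sum_nonneg fun a _ => hq a b c
  have hpz0 : ∀ c, 0 ≤ pz c := fun c => Finset.sum_nonneg fun a _ => hpxz0 a c
  set L : α → β → γ → ℝ := fun a b c =>
    q a b c * (Real.log (q a b c) + Real.log (pz c)
      - Real.log (pxz a c) - Real.log (pyz b c)) with hL
  set m : α → β → γ → ℝ := fun a b c => pxz a c * pyz b c / pz c with hm
  have hm0 : ∀ a b c, 0 ≤ m a b c := fun a b c =>
    div_nonneg (mul_nonneg (hpxz0 a c) (hpyz0 b c)) (hpz0 c)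
  have hpoint : ∀ a b c, q a b c - m a b c ≤ L a b c := by
    intro a b c
    rcases eq_or_lt_of_le (hq a b c) with h0 | h0
    · simp only [hL, hm, ← h0]
      simp only [zero_mul, zero_sub, sub_zero, neg_nonpos]
      exact hm0 a b c
    · have hx : q a b c ≤ pxz a c := Finset.single_le_sum (fun b _ => hq a b c) (mem_univ b)
      have hxz : 0 < pxz a c := lt_of_lt_of_le h0 hx
      have hyz : 0 < pyz b c := lt_of_lt_of_le h0
        (Finset.single_le_sum (fun a _ => hq a b c) (mem_univ a))
      have hzc : 0 < pz c := lt_of_lt_of_le hxz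
        (Finset.single_le_sum (fun a _ => hpxz0 a c) (mem_univ a))
      have harg : 0 < pxz a c * pyz b c / (q a b c * pz c) := by positivity
      have hlog := Real.log_le_sub_one_of_pos harg
      rw [Real.log_div (by positivity) (by positivity),
        Real.log_mul (ne_of_gt hxz) (ne_of_gt hyz),
        Real.log_mul (ne_of_gt h0) (ne_of_gt hzc)] at hlog
      have h2 : 1 - pxz a c * pyz b c / (q a b c * pz c)
          ≤ Real.log (q a b c) + Real.log (pz c) - Real.log (pxz a c) - Real.log (pyz b c) := by
        linarith
      have h3 := mul_le_mul_of_nonneg_left h2 (le_of_lt h0)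
      have h4 : q a b c * (1 - pxz a c * pyz b c / (q a b c * pz c))
          = q a b c - m a b c := by
        simp only [hm]
        rw [mul_sub, mul_one, mul_div_assoc', mul_div_mul_left _ _ (ne_of_gt h0)]
      rw [h4] at h3
      exact h3
  have hsum_m : ∑ a, ∑ b, ∑ c, m a b c ≤ 1 := by
    rw [sum_rot m]
    have hterm : ∀ c, ∑ a, ∑ b, m a b c = pz c * pz c / pz c := by
      intro c
      have e : ∑ a, ∑ b, m a b c = (∑ a, pxz a c) * (∑ b, pyz b c) / pz c := by
        rw [Finset.sum_mul, Finset.sum_div]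
        apply Finset.sum_congr rfl
        intro a _
        rw [Finset.mul_sum, Finset.sum_div]
      have hA : ∑ a, pxz a c = pz c := rfl
      have hB : ∑ b, pyz b c = pz c := Finset.sum_comm
      rw [e, hA, hB]
    have hfin : ∑ c, pz c = 1 := by
      rw [show (∑ c, pz c) = ∑ c, ∑ a, ∑ b, q a b c from rfl, ← sum_rot, hq1]
    calc ∑ c, ∑ a, ∑ b, m a b c = ∑ c, pz c * pz c / pz c :=
          Finset.sum_congr rfl fun c _ => hterm c
      _ ≤ ∑ c, pz c := by
          apply Finset.sum_le_sum
          intro c _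
          rcases eq_or_lt_of_le (hpz0 c) with h | h
          · rw [← h]; simp
          · rw [mul_div_assoc, div_self (ne_of_gt h), mul_one]
      _ = 1 := hfin
  have hsum_L : 0 ≤ ∑ a, ∑ b, ∑ c, L a b c := by
    have h1 : ∑ a, ∑ b, ∑ c, (q a b c - m a b c) ≤ ∑ a, ∑ b, ∑ c, L a b c :=
      Finset.sum_le_sum fun a _ => Finset.sum_le_sum fun b _ =>
        Finset.sum_le_sum fun c _ => hpoint a b c
    have h2 : ∑ a, ∑ b, ∑ c, (q a b c - m a b c)
        = 1 - ∑ a, ∑ b, ∑ c, m a b c := by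
      rw [← hq1]
      simp [Finset.sum_sub_distrib]
    linarith
  have hgoal : ∑ a, ∑ c, Real.negMulLog (pxz a c) + ∑ b, ∑ c, Real.negMulLog (pyz b c)
      - (∑ a, ∑ b, ∑ c, Real.negMulLog (q a b c) + ∑ c, Real.negMulLog (pz c))
      = ∑ a, ∑ b, ∑ c, L a b c := by
    have e1 : ∑ a, ∑ c, Real.negMulLog (pxz a c)
        = ∑ a, ∑ b, ∑ c, (-(q a b c) * Real.log (pxz a c)) := by
      apply Finset.sum_congr rfl; intro a _
      rw [Finset.sum_comm]
      apply Finset.sum_congr rfl; intro c _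
      unfold Real.negMulLog
      simp only [← Finset.sum_mul, Finset.sum_neg_distrib]
      rfl
    have e2 : ∑ b, ∑ c, Real.negMulLog (pyz b c)
        = ∑ a, ∑ b, ∑ c, (-(q a b c) * Real.log (pyz b c)) := by
      rw [sum_rot2 (fun a b c => (-(q a b c) * Real.log (pyz b c)))]
      apply Finset.sum_congr rfl; intro b _
      apply Finset.sum_congr rfl; intro c _
      unfold Real.negMulLog
      simp only [← Finset.sum_mul, Finset.sum_neg_distrib]
      rfl
    have e3 : ∑ c, Real.negMulLog (pz c)
        = ∑ a, ∑ b, ∑ c, (-(q a b c) * Real.log (pz c)) := by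
      rw [sum_rot (fun a b c => (-(q a b c) * Real.log (pz c)))]
      apply Finset.sum_congr rfl; intro c _
      unfold Real.negMulLog
      simp only [← Finset.sum_mul, Finset.sum_neg_distrib]
      rfl
    rw [e1, e2, e3]
    rw [← Finset.sum_add_distrib, ← Finset.sum_add_distrib, ← Finset.sum_sub_distrib]
    apply Finset.sum_congr rfl; intro a _
    rw [← Finset.sum_add_distrib, ← Finset.sum_add_distrib, ← Finset.sum_sub_distrib]
    apply Finset.sum_congr rfl; intro b _
    rw [← Finset.sum_add_distrib, ← Finset.sum_add_distrib, ← Finset.sum_sub_distrib]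
    apply Finset.sum_congr rfl; intro c _
    unfold Real.negMulLog
    simp only [hL]
    ring
  show ∑ a, ∑ b, ∑ c, Real.negMulLog (q a b c) + ∑ c, Real.negMulLog (pz c)
    ≤ ∑ a, ∑ c, Real.negMulLog (pxz a c) + ∑ b, ∑ c, Real.negMulLog (pyz b c)
  linarith [hgoal, hsum_L]

end Key2
section Marg
variable {Ω α β γ : Type*} [Fintype Ω] [Fintype α] [DecidableEq α] [Fintype β] [DecidableEq β]
  [Fintype γ] [DecidableEq γ]
variable (μ : Ω → ℝ) (X : Ω → α) (Y : Ω → β) (Z : Ω → γ)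

lemma pushf_marg_mid (a : α) (c : γ) :
    pushf μ (fun ω => (X ω, Z ω)) (a, c)
      = ∑ b, pushf μ (fun ω => (X ω, Y ω, Z ω)) (a, b, c) := by
  unfold pushf
  simp only [Finset.sum_filter]
  rw [Finset.sum_comm]
  apply Finset.sum_congr rfl
  intro ω _
  by_cases hx : X ω = a <;> by_cases hz : Z ω = c <;>
    simp [Prod.ext_iff, hx, hz]

lemma pushf_marg_left (b : β) (c : γ) :
    pushf μ (fun ω => (Y ω, Z ω)) (b, c)
      = ∑ a, pushf μ (fun ω => (X ω, Y ω, Z ω)) (a, b, c) := by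
  unfold pushf
  simp only [Finset.sum_filter]
  rw [Finset.sum_comm]
  apply Finset.sum_congr rfl
  intro ω _
  by_cases hy : Y ω = b <;> by_cases hz : Z ω = c <;>
    simp [Prod.ext_iff, hy, hz]

lemma pushf_marg_z (c : γ) :
    pushf μ Z c = ∑ a, ∑ b, pushf μ (fun ω => (X ω, Y ω, Z ω)) (a, b, c) := by
  unfold pushf
  simp only [Finset.sum_filter]
  rw [sum_rot (fun a b ω => if (X ω, Y ω, Z ω) = (a, b, c) then μ ω else 0)]
  apply Finset.sum_congr rfl
  intro ω _
  by_cases hz : Z ω = c <;>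
    simp [Prod.ext_iff, hz, ite_and, Finset.sum_ite_eq', Finset.sum_ite_eq]

end Marg

theorem condMI_nonneg {Ω α β γ : Type*} [Fintype Ω]
    [Fintype α] [DecidableEq α] [Fintype β] [DecidableEq β] [Fintype γ] [DecidableEq γ]
    {μ : Ω → ℝ} (hμ0 : ∀ ω, 0 ≤ μ ω) (hμ1 : ∑ ω, μ ω = 1)
    (X : Ω → α) (Y : Ω → β) (Z : Ω → γ) :
    0 ≤ condMI μ X Y Z := by
  set Q : α → β → γ → ℝ := fun a b c => pushf μ (fun ω => (X ω, Y ω, Z ω)) (a, b, c) with hQ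
  have hQ0 : ∀ a b c, 0 ≤ Q a b c := fun a b c =>
    Finset.sum_nonneg fun ω _ => hμ0 ω
  have hQ1 : ∑ a, ∑ b, ∑ c, Q a b c = 1 := by
    rw [← hμ1, ← sum_pushf μ (fun ω => (X ω, Y ω, Z ω))]
    rw [Fintype.sum_prod_type]
    simp only [Fintype.sum_prod_type]
    rfl
  have e_xyz : entropy μ (fun ω => (X ω, Y ω, Z ω))
      = ∑ a, ∑ b, ∑ c, Real.negMulLog (Q a b c) := by
    rw [entropy_eq, Fintype.sum_prod_type]
    simp only [Fintype.sum_prod_type]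
    rfl
  have e_xz : entropy μ (fun ω => (X ω, Z ω))
      = ∑ a, ∑ c, Real.negMulLog (∑ b, Q a b c) := by
    rw [entropy_eq, Fintype.sum_prod_type]
    exact Finset.sum_congr rfl fun a _ => Finset.sum_congr rfl fun c _ => by
      rw [pushf_marg_mid μ X Y Z a c]
  have e_yz : entropy μ (fun ω => (Y ω, Z ω))
      = ∑ b, ∑ c, Real.negMulLog (∑ a, Q a b c) := by
    rw [entropy_eq, Fintype.sum_prod_type]
    exact Finset.sum_congr rfl fun b _ => Finset.sum_congr rfl fun c _ => by
      rw [pushf_marg_left μ X Y Z b c]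
  have e_z : entropy μ Z = ∑ c, Real.negMulLog (∑ a, ∑ b, Q a b c) := by
    rw [entropy_eq]
    exact Finset.sum_congr rfl fun c _ => by rw [pushf_marg_z μ X Y Z c]
  have := key_ineq Q hQ0 hQ1
  unfold condMI
  rw [e_xyz, e_xz, e_yz, e_z]
  linarith


lemma condMI_eq_zero_of_ae_const {Ω α β γ : Type*} [Fintype Ω]
    [Fintype α] [DecidableEq α] [Fintype β] [DecidableEq β] [Fintype γ] [DecidableEq γ]
    (μ : Ω → ℝ) (X : Ω → α) (Y : Ω → β) (Z : Ω → γ) (c : β)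
    (hc : ∀ ω, μ ω ≠ 0 → Y ω = c) : condMI μ X Y Z = 0 := by
  have e1 : entropy μ (fun ω => (Y ω, Z ω)) = entropy μ Z := by
    rw [entropy_congr_ae (X' := fun ω => (c, Z ω)) (fun ω h => by rw [hc ω h])]
    exact entropy_comp_inj μ Z _ (fun z => (c, z))
      (fun z z' h => by simpa using h) (fun ω => rfl)
  have e2 : entropy μ (fun ω => (X ω, Y ω, Z ω)) = entropy μ (fun ω => (X ω, Z ω)) := by
    rw [entropy_congr_ae (X' := fun ω => (X ω, c, Z ω)) (fun ω h => by rw [hc ω h])]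
    exact entropy_comp_inj μ (fun ω => (X ω, Z ω)) _ (fun p => (p.1, c, p.2))
      (Function.LeftInverse.injective (g := fun p => (p.1, p.2.2)) fun p => rfl) (fun ω => rfl)
  unfold condMI
  rw [e1, e2]
  ring

section Mix
variable {Ω α : Type*} [Fintype Ω] [Fintype α] [DecidableEq α]

/-- Mixture measure on `Ω × Bool`. -/
noncomputable def mixμ (μ0 μ1 : Ω → ℝ) (t : ℝ) : Ω × Bool → ℝ :=
  fun p => if p.2 then t * μ1 p.1 else (1 - t) * μ0 p.1

lemma mixμ_nonneg {μ0 μ1 : Ω → ℝ} (h0 : ∀ ω, 0 ≤ μ0 ω) (h1 : ∀ ω, 0 ≤ μ1 ω)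
    {t : ℝ} (ht0 : 0 ≤ t) (ht1 : t ≤ 1) (p : Ω × Bool) : 0 ≤ mixμ μ0 μ1 t p := by
  unfold mixμ
  rcases p with ⟨ω, b⟩
  cases b
  · simpa using mul_nonneg (by linarith) (h0 ω)
  · simpa using mul_nonneg ht0 (h1 ω)

lemma mixμ_sum {μ0 μ1 : Ω → ℝ} (hs0 : ∑ ω, μ0 ω = 1) (hs1 : ∑ ω, μ1 ω = 1) (t : ℝ) :
    ∑ p, mixμ μ0 μ1 t p = 1 := by
  unfold mixμ
  rw [Fintype.sum_prod_type]
  simp only [Fintype.sum_bool]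
  norm_num
  rw [Finset.sum_add_distrib, ← Finset.mul_sum, ← Finset.mul_sum, hs0, hs1]
  ring

lemma pushf_mix_fst (μ0 μ1 : Ω → ℝ) (t : ℝ) (V : Ω → α) (a : α) :
    pushf (mixμ μ0 μ1 t) (fun p => V p.1) a
      = pushf (fun ω => t * μ1 ω + (1 - t) * μ0 ω) V a := by
  unfold pushf mixμ
  rw [Finset.sum_filter, Finset.sum_filter, Fintype.sum_prod_type]
  apply Finset.sum_congr rfl; intro ω _
  rw [Fintype.sum_bool]
  by_cases h : V ω = a <;> simp [h] <;> ring

lemma pushf_mix_pair (μ0 μ1 : Ω → ℝ) (t : ℝ) (V : Ω → α) (a : α) (b : Bool) :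
    pushf (mixμ μ0 μ1 t) (fun p => (V p.1, p.2)) (a, b)
      = if b then t * pushf μ1 V a else (1 - t) * pushf μ0 V a := by
  unfold pushf mixμ
  simp only [Finset.sum_filter, Fintype.sum_prod_type, Fintype.sum_bool]
  cases b <;> norm_num [Finset.mul_sum] <;>
    · apply Finset.sum_congr rfl; intro ω _
      by_cases h : V ω = a <;> simp [h]

lemma entropy_mix_pair {μ0 μ1 : Ω → ℝ} (hs0 : ∑ ω, μ0 ω = 1) (hs1 : ∑ ω, μ1 ω = 1)
    (t : ℝ) (V : Ω → α) :
    entropy (mixμ μ0 μ1 t) (fun p => (V p.1, p.2))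
      = t * entropy μ1 V + (1 - t) * entropy μ0 V
        + (Real.negMulLog t + Real.negMulLog (1 - t)) := by
  rw [entropy_eq, Fintype.sum_prod_type]
  simp only [Fintype.sum_bool, pushf_mix_pair]
  norm_num
  have e : ∀ a, Real.negMulLog (t * pushf μ1 V a) + Real.negMulLog ((1 - t) * pushf μ0 V a)
      = (pushf μ1 V a * Real.negMulLog t + t * Real.negMulLog (pushf μ1 V a))
        + (pushf μ0 V a * Real.negMulLog (1 - t)
          + (1 - t) * Real.negMulLog (pushf μ0 V a)) := by
    intro a
    rw [Real.negMulLog_mul, Real.negMulLog_mul]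
  rw [Finset.sum_congr rfl fun a _ => e a]
  rw [Finset.sum_add_distrib, Finset.sum_add_distrib, Finset.sum_add_distrib,
    ← Finset.sum_mul, ← Finset.mul_sum, ← Finset.sum_mul, ← Finset.mul_sum,
    sum_pushf, sum_pushf, hs0, hs1, entropy_eq, entropy_eq]
  ring

end Mix

section SR
variable {X0A X1A Y1A Y2A Yh1A : Type}
  [Fintype X0A] [DecidableEq X0A] [Fintype X1A] [DecidableEq X1A]
  [Fintype Y1A] [DecidableEq Y1A] [Fintype Y2A] [DecidableEq Y2A]
  [Fintype Yh1A] [DecidableEq Yh1A]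

/-- base marginal projection -/
def srBase : X0A × X1A × Y1A × Y2A × Yh1A → X0A × X1A × Y1A × Y2A :=
  fun ω => (ω.1, ω.2.1, ω.2.2.1, ω.2.2.2.1)

/-- base weight -/
noncomputable def bWt (p0 : X0A → ℝ) (p1 : X1A → ℝ)
    (W : X0A → X1A → Y1A × Y2A → ℝ) : X0A × X1A × Y1A × Y2A → ℝ :=
  fun s => p0 s.1 * p1 s.2.1 * W s.1 s.2.1 (s.2.2.1, s.2.2.2)

variable (p0 : X0A → ℝ) (p1 : X1A → ℝ)
  (W : X0A → X1A → Y1A × Y2A → ℝ) (κ : Y1A → X1A → Yh1A → ℝ)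

lemma muSR_nonneg (h0 : ∀ x, 0 ≤ p0 x) (h1 : ∀ x, 0 ≤ p1 x)
    (hW : ∀ x0 x1 y, 0 ≤ W x0 x1 y) (hκ : ∀ y x yh, 0 ≤ κ y x yh) (ω) :
    0 ≤ muSR p0 p1 W κ ω := by
  unfold muSR
  have := h0 ω.1; have := h1 ω.2.1; have := hW ω.1 ω.2.1 (ω.2.2.1, ω.2.2.2.1)
  have := hκ ω.2.2.1 ω.2.1 ω.2.2.2.2
  positivity

lemma muSR_sum_one (h0 : ∑ x, p0 x = 1) (h1 : ∑ x, p1 x = 1)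
    (hWs : ∀ x0 x1, ∑ y, W x0 x1 y = 1) (hκs : ∀ y x, ∑ yh, κ y x yh = 1) :
    ∑ ω, muSR p0 p1 W κ ω = 1 := by
  unfold muSR
  rw [Fintype.sum_prod_type]
  simp only [Fintype.sum_prod_type]
  have : ∀ x0 x1, (∑ y1, ∑ y2, ∑ yh, p0 x0 * p1 x1 * W x0 x1 (y1, y2) * κ y1 x1 yh)
      = p0 x0 * p1 x1 := by
    intro x0 x1
    have e1 : ∀ y1 y2, (∑ yh, p0 x0 * p1 x1 * W x0 x1 (y1, y2) * κ y1 x1 yh)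
        = p0 x0 * p1 x1 * W x0 x1 (y1, y2) := by
      intro y1 y2
      rw [← Finset.mul_sum, hκs, mul_one]
    calc (∑ y1, ∑ y2, ∑ yh, p0 x0 * p1 x1 * W x0 x1 (y1, y2) * κ y1 x1 yh)
        = ∑ y1, ∑ y2, p0 x0 * p1 x1 * W x0 x1 (y1, y2) := by
          exact Finset.sum_congr rfl fun y1 _ => Finset.sum_congr rfl fun y2 _ => e1 y1 y2
      _ = p0 x0 * p1 x1 * ∑ y1, ∑ y2, W x0 x1 (y1, y2) := by
          simp only [Finset.mul_sum]
      _ = p0 x0 * p1 x1 := by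
          rw [show (∑ y1, ∑ y2, W x0 x1 (y1, y2)) = ∑ y, W x0 x1 y from
            (Fintype.sum_prod_type _).symm, hWs, mul_one]
  calc (∑ x0, ∑ x1, ∑ y1, ∑ y2, ∑ yh, p0 x0 * p1 x1 * W x0 x1 (y1, y2) * κ y1 x1 yh)
      = ∑ x0, ∑ x1, p0 x0 * p1 x1 :=
        Finset.sum_congr rfl fun x0 _ => Finset.sum_congr rfl fun x1 _ => this x0 x1
    _ = (∑ x0, p0 x0) * (∑ x1, p1 x1) := by rw [Finset.sum_mul]; simp [Finset.mul_sum]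
    _ = 1 := by rw [h0, h1, mul_one]

variable {α : Type*} [Fintype α] [DecidableEq α]

lemma muSR_push_base (hκs : ∀ y x, ∑ yh, κ y x yh = 1) (V : X0A × X1A × Y1A × Y2A → α) (a : α) :
    pushf (muSR p0 p1 W κ) (fun ω => V (srBase ω)) a
      = ∑ s ∈ Finset.univ.filter (fun s => V s = a), bWt p0 p1 W s := by
  unfold pushf
  rw [Finset.sum_filter, Finset.sum_filter]
  rw [Fintype.sum_prod_type]
  simp only [Fintype.sum_prod_type]
  apply Finset.sum_congr rfl; intro x0 _
  apply Finset.sum_congr rfl; intro x1 _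
  apply Finset.sum_congr rfl; intro y1 _
  apply Finset.sum_congr rfl; intro y2 _
  by_cases h : V (x0, x1, y1, y2) = a
  · simp only [srBase, muSR, bWt, h, if_true]
    rw [← Finset.mul_sum, hκs, mul_one]
  · simp only [srBase, muSR, bWt, h, if_false]
    simp

lemma muSR_push_pairYh (hκs : ∀ y x, ∑ yh, κ y x yh = 1)
    (V : X0A × X1A × Y1A × Y2A → α) (r : α → Y1A × X1A)
    (hr : ∀ s, r (V s) = (s.2.2.1, s.2.1)) (a : α) (yv : Yh1A) :
    pushf (muSR p0 p1 W κ) (fun ω => (V (srBase ω), ω.2.2.2.2)) (a, yv)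
      = κ (r a).1 (r a).2 yv * pushf (muSR p0 p1 W κ) (fun ω => V (srBase ω)) a := by
  rw [muSR_push_base p0 p1 W κ hκs V a]
  unfold pushf
  rw [Finset.sum_filter, Finset.mul_sum, Finset.sum_filter]
  rw [Fintype.sum_prod_type]
  simp only [Fintype.sum_prod_type]
  apply Finset.sum_congr rfl; intro x0 _
  apply Finset.sum_congr rfl; intro x1 _
  apply Finset.sum_congr rfl; intro y1 _
  apply Finset.sum_congr rfl; intro y2 _
  by_cases h : V (x0, x1, y1, y2) = a
  · have hra : r a = (y1, x1) := by rw [← h, hr (x0, x1, y1, y2)]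
    simp only [srBase, muSR, bWt, h, if_true, Prod.mk.injEq, true_and]
    rw [show (∑ yh, if yh = yv then
        p0 x0 * p1 x1 * W x0 x1 (y1, y2) * κ y1 x1 yh else 0)
      = p0 x0 * p1 x1 * W x0 x1 (y1, y2) * κ y1 x1 yv from Finset.sum_ite_eq' _ _ _ |>.trans
        (by simp)]
    rw [hra]
    ring
  · simp only [srBase, muSR, bWt, Prod.mk.injEq, h, false_and, if_false]
    simp

lemma entropy_base_pairYh (hκs : ∀ y x, ∑ yh, κ y x yh = 1)
    (V : X0A × X1A × Y1A × Y2A → α) (r : α → Y1A × X1A)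
    (hr : ∀ s, r (V s) = (s.2.2.1, s.2.1)) :
    entropy (muSR p0 p1 W κ) (fun ω => (V (srBase ω), ω.2.2.2.2))
      = entropy (muSR p0 p1 W κ) (fun ω => V (srBase ω))
        + ∑ a, pushf (muSR p0 p1 W κ) (fun ω => V (srBase ω)) a
            * ∑ yv, Real.negMulLog (κ (r a).1 (r a).2 yv) := by
  rw [entropy_eq, entropy_eq, Fintype.sum_prod_type]
  rw [add_comm, ← Finset.sum_add_distrib]
  apply Finset.sum_congr rfl; intro a _
  have : ∀ yv, pushf (muSR p0 p1 W κ) (fun ω => (V (srBase ω), ω.2.2.2.2)) (a, yv)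
      = κ (r a).1 (r a).2 yv * pushf (muSR p0 p1 W κ) (fun ω => V (srBase ω)) a :=
    fun yv => muSR_push_pairYh p0 p1 W κ hκs V r hr a yv
  calc (∑ yv, Real.negMulLog (pushf (muSR p0 p1 W κ)
        (fun ω => (V (srBase ω), ω.2.2.2.2)) (a, yv)))
      = ∑ yv, (pushf (muSR p0 p1 W κ) (fun ω => V (srBase ω)) a
          * Real.negMulLog (κ (r a).1 (r a).2 yv)
        + κ (r a).1 (r a).2 yv
          * Real.negMulLog (pushf (muSR p0 p1 W κ) (fun ω => V (srBase ω)) a)) := by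
        apply Finset.sum_congr rfl; intro yv _
        rw [this yv, Real.negMulLog_mul]
    _ = _ := by
        rw [Finset.sum_add_distrib, ← Finset.mul_sum, ← Finset.sum_mul, hκs, one_mul]

lemma pushf_weight {Ω : Type*} [Fintype Ω] (μ : Ω → ℝ) (YX : Ω → Y1A × X1A)
    (V : Ω → α) (r : α → Y1A × X1A)
    (hr : ∀ ω, r (V ω) = YX ω) (F : Y1A × X1A → ℝ) :
    ∑ a, pushf μ V a * F (r a) = ∑ ω, μ ω * F (YX ω) := by
  unfold pushf
  rw [← Finset.sum_fiberwise Finset.univ V (fun ω => μ ω * F (YX ω))]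
  apply Finset.sum_congr rfl; intro a _
  rw [Finset.sum_mul]
  apply Finset.sum_congr rfl; intro ω hω
  have h : V ω = a := (Finset.mem_filter.1 hω).2
  rw [← h, hr ω]

end SR

section SRMain
variable {X0A X1A Y1A Y2A Yh1A : Type}
  [Fintype X0A] [DecidableEq X0A] [Fintype X1A] [DecidableEq X1A]
  [Fintype Y1A] [DecidableEq Y1A] [Fintype Y2A] [DecidableEq Y2A]
  [Fintype Yh1A] [DecidableEq Yh1A]
variable (p0 : X0A → ℝ) (p1 : X1A → ℝ) (W : X0A → X1A → Y1A × Y2A → ℝ)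
  (κ κ' : Y1A → X1A → Yh1A → ℝ)

lemma muSR_entropy_base_indep {α : Type} [Fintype α] [DecidableEq α]
    (hκs : ∀ y x, ∑ yh, κ y x yh = 1) (hκs' : ∀ y x, ∑ yh, κ' y x yh = 1)
    (V : X0A × X1A × Y1A × Y2A → α) :
    entropy (muSR p0 p1 W κ) (fun ω => V (srBase ω))
      = entropy (muSR p0 p1 W κ') (fun ω => V (srBase ω)) :=
  entropy_congr_pf _ _ _ _ fun a => by
    rw [muSR_push_base p0 p1 W κ hκs V a, muSR_push_base p0 p1 W κ' hκs' V a]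

lemma entropy_mix_fst_eq {Ω α : Type*} [Fintype Ω] [Fintype α] [DecidableEq α]
    (μ0 μ1 : Ω → ℝ) (t : ℝ) (V : Ω → α) :
    entropy (mixμ μ0 μ1 t) (fun p => V p.1)
      = entropy (fun ω => t * μ1 ω + (1 - t) * μ0 ω) V :=
  entropy_congr_pf _ _ _ _ (fun a => pushf_mix_fst μ0 μ1 t V a)

/-- `I(X₀;Ŷ,Y₂|X₁) - I(Y₁;Ŷ|X₁,Y₂) = I(X₀;Y₂|X₁) - I(Y₁;Ŷ|X₀,X₁,Y₂)`. -/
lemma srAG_identity (hκs : ∀ y x, ∑ yh, κ y x yh = 1) :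
    condMI (muSR p0 p1 W κ) (fun ω => ω.1) (fun ω => (ω.2.2.2.2, ω.2.2.2.1)) (fun ω => ω.2.1)
      - condMI (muSR p0 p1 W κ) (fun ω => ω.2.2.1) (fun ω => ω.2.2.2.2)
          (fun ω => (ω.2.1, ω.2.2.2.1))
    = condMI (muSR p0 p1 W κ) (fun ω => ω.1) (fun ω => ω.2.2.2.1) (fun ω => ω.2.1)
      - condMI (muSR p0 p1 W κ) (fun ω => ω.2.2.1) (fun ω => ω.2.2.2.2)
          (fun ω => (ω.1, ω.2.1, ω.2.2.2.1)) := by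
  set μ := muSR p0 p1 W κ with hμdef
  have E1 : entropy μ (fun ω => ((ω.2.2.2.2, ω.2.2.2.1), ω.2.1))
      = entropy μ (fun ω => (ω.2.2.2.2, (ω.2.1, ω.2.2.2.1))) :=
    entropy_comp_inj μ _ _ (fun q => ((q.1, q.2.2), q.2.1))
      (Function.LeftInverse.injective (g := fun p => (p.1.1, (p.2, p.1.2))) fun q => rfl)
      (fun ω => rfl)
  have E2 : entropy μ (fun ω => (ω.1, (ω.2.2.2.2, ω.2.2.2.1), ω.2.1))
      = entropy μ (fun ω => (ω.2.2.2.2, (ω.1, ω.2.1, ω.2.2.2.1))) :=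
    entropy_comp_inj μ _ _ (fun q => (q.2.1, ((q.1, q.2.2.2), q.2.2.1)))
      (Function.LeftInverse.injective
        (g := fun p => (p.2.1.1, (p.1, (p.2.2, p.2.1.2)))) fun q => rfl)
      (fun ω => rfl)
  have E3 : entropy μ (fun ω => (ω.2.1, ω.2.2.2.1))
      = entropy μ (fun ω => (ω.2.2.2.1, ω.2.1)) :=
    entropy_comp_inj μ _ _ (fun q => (q.2, q.1))
      (Function.LeftInverse.injective (g := fun p => (p.2, p.1)) fun q => rfl)
      (fun ω => rfl)
  have E4 : entropy μ (fun ω => (ω.1, ω.2.1, ω.2.2.2.1))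
      = entropy μ (fun ω => (ω.1, ω.2.2.2.1, ω.2.1)) :=
    entropy_comp_inj μ _ _ (fun q => (q.1, (q.2.2, q.2.1)))
      (Function.LeftInverse.injective (g := fun p => (p.1, (p.2.2, p.2.1))) fun q => rfl)
      (fun ω => rfl)
  have E5c : entropy μ (fun ω => (ω.2.2.1, ω.2.2.2.2, (ω.2.1, ω.2.2.2.1)))
      = entropy μ (fun ω => ((ω.2.2.1, (ω.2.1, ω.2.2.2.1)), ω.2.2.2.2)) :=
    entropy_comp_inj μ _ _ (fun q => (q.1.1, (q.2, q.1.2)))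
      (Function.LeftInverse.injective (g := fun p => ((p.1, p.2.2), p.2.1)) fun q => rfl)
      (fun ω => rfl)
  have E5a : entropy μ (fun ω => ((ω.2.2.1, (ω.2.1, ω.2.2.2.1)), ω.2.2.2.2))
      = entropy μ (fun ω => (ω.2.2.1, (ω.2.1, ω.2.2.2.1)))
        + ∑ a, pushf μ (fun ω => (ω.2.2.1, (ω.2.1, ω.2.2.2.1))) a
            * ∑ yv, Real.negMulLog (κ a.1 a.2.1 yv) :=
    entropy_base_pairYh p0 p1 W κ hκs (fun s => (s.2.2.1, (s.2.1, s.2.2.2)))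
      (fun v : Y1A × X1A × Y2A => (v.1, v.2.1)) (fun s => rfl)
  have E5b : ∑ a, pushf μ (fun ω => (ω.2.2.1, (ω.2.1, ω.2.2.2.1))) a
        * ∑ yv, Real.negMulLog (κ a.1 a.2.1 yv)
      = ∑ ω, μ ω * ∑ yv, Real.negMulLog (κ ω.2.2.1 ω.2.1 yv) :=
    pushf_weight μ (fun ω => (ω.2.2.1, ω.2.1))
      (fun ω => (ω.2.2.1, (ω.2.1, ω.2.2.2.1)))
      (fun v : Y1A × X1A × Y2A => (v.1, v.2.1)) (fun ω => rfl)
      (fun q => ∑ yv, Real.negMulLog (κ q.1 q.2 yv))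
  have E6c : entropy μ (fun ω => (ω.2.2.1, ω.2.2.2.2, (ω.1, ω.2.1, ω.2.2.2.1)))
      = entropy μ (fun ω => ((ω.2.2.1, (ω.1, ω.2.1, ω.2.2.2.1)), ω.2.2.2.2)) :=
    entropy_comp_inj μ _ _ (fun q => (q.1.1, (q.2, q.1.2)))
      (Function.LeftInverse.injective (g := fun p => ((p.1, p.2.2), p.2.1)) fun q => rfl)
      (fun ω => rfl)
  have E6a : entropy μ (fun ω => ((ω.2.2.1, (ω.1, ω.2.1, ω.2.2.2.1)), ω.2.2.2.2))
      = entropy μ (fun ω => (ω.2.2.1, (ω.1, ω.2.1, ω.2.2.2.1)))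
        + ∑ a, pushf μ (fun ω => (ω.2.2.1, (ω.1, ω.2.1, ω.2.2.2.1))) a
            * ∑ yv, Real.negMulLog (κ a.1 a.2.2.1 yv) :=
    entropy_base_pairYh p0 p1 W κ hκs (fun s => (s.2.2.1, (s.1, s.2.1, s.2.2.2)))
      (fun v : Y1A × X0A × X1A × Y2A => (v.1, v.2.2.1)) (fun s => rfl)
  have E6b : ∑ a, pushf μ (fun ω => (ω.2.2.1, (ω.1, ω.2.1, ω.2.2.2.1))) a
        * ∑ yv, Real.negMulLog (κ a.1 a.2.2.1 yv)
      = ∑ ω, μ ω * ∑ yv, Real.negMulLog (κ ω.2.2.1 ω.2.1 yv) :=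
    pushf_weight μ (fun ω => (ω.2.2.1, ω.2.1))
      (fun ω => (ω.2.2.1, (ω.1, ω.2.1, ω.2.2.2.1)))
      (fun v : Y1A × X0A × X1A × Y2A => (v.1, v.2.2.1)) (fun ω => rfl)
      (fun q => ∑ yv, Real.negMulLog (κ q.1 q.2 yv))
  simp only [condMI]
  linarith [E1, E2, E3, E4, E5a, E5b, E5c, E6a, E6b]

end SRMain

section SRMix
variable {X0A X1A Y1A Y2A Yh1A : Type}
  [Fintype X0A] [DecidableEq X0A] [Fintype X1A] [DecidableEq X1A]
  [Fintype Y1A] [DecidableEq Y1A] [Fintype Y2A] [DecidableEq Y2A]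
  [Fintype Yh1A] [DecidableEq Yh1A]
variable (p0 : X0A → ℝ) (p1 : X1A → ℝ) (W : X0A → X1A → Y1A × Y2A → ℝ)
  (κ : Y1A → X1A → Yh1A → ℝ)

lemma srh_mix (hp00 : ∀ x, 0 ≤ p0 x) (hp0s : ∑ x, p0 x = 1)
    (hp10 : ∀ x, 0 ≤ p1 x) (hp1s : ∑ x, p1 x = 1)
    (hW0 : ∀ x0 x1 y, 0 ≤ W x0 x1 y) (hWs : ∀ x0 x1, ∑ y, W x0 x1 y = 1)
    (hκ0 : ∀ y x yh, 0 ≤ κ y x yh) (hκs : ∀ y x, ∑ yh, κ y x yh = 1)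
    (yh0 : Yh1A) {t : ℝ} (ht0 : 0 ≤ t) (ht1 : t ≤ 1) :
    condMI (muSR p0 p1 W
        (fun y x yh => t * κ y x yh + (1 - t) * (if yh = yh0 then 1 else 0)))
        (fun ω => ω.2.2.1) (fun ω => ω.2.2.2.2) (fun ω => (ω.1, ω.2.1, ω.2.2.2.1))
      ≤ condMI (muSR p0 p1 W κ)
        (fun ω => ω.2.2.1) (fun ω => ω.2.2.2.2) (fun ω => (ω.1, ω.2.1, ω.2.2.2.1)) := by
  set δk : Y1A → X1A → Yh1A → ℝ := fun y x yh => if yh = yh0 then 1 else 0 with hδdef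
  set κt : Y1A → X1A → Yh1A → ℝ :=
    fun y x yh => t * κ y x yh + (1 - t) * (if yh = yh0 then 1 else 0) with hκtdef
  have hδ0 : ∀ y x yh, 0 ≤ δk y x yh := by
    intro y x yh; simp only [hδdef]; split <;> norm_num
  have hδs : ∀ y x, ∑ yh, δk y x yh = 1 := by
    intro y x; simp [hδdef, Finset.sum_ite_eq']
  have hκt0 : ∀ y x yh, 0 ≤ κt y x yh := by
    intro y x yh
    have h2 : 0 ≤ t * κ y x yh := mul_nonneg ht0 (hκ0 y x yh)
    simp only [hκtdef]
    by_cases h : yh = yh0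
    · subst h; simp; linarith
    · simp [h]; linarith
  have hκts : ∀ y x, ∑ yh, κt y x yh = 1 := by
    intro y x; simp only [hκtdef]
    rw [Finset.sum_add_distrib, ← Finset.mul_sum, ← Finset.mul_sum, hκs]
    simp [Finset.sum_ite_eq']
  set μ1 := muSR p0 p1 W κ with hμ1def
  set μ0 := muSR p0 p1 W δk with hμ0def
  set μt := muSR p0 p1 W κt with hμtdef
  have hμ10 : ∀ ω, 0 ≤ μ1 ω := muSR_nonneg p0 p1 W κ hp00 hp10 hW0 hκ0
  have hμ00 : ∀ ω, 0 ≤ μ0 ω := muSR_nonneg p0 p1 W δk hp00 hp10 hW0 hδ0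
  have hμ1s : ∑ ω, μ1 ω = 1 := muSR_sum_one p0 p1 W κ hp0s hp1s hWs hκs
  have hμ0s : ∑ ω, μ0 ω = 1 := muSR_sum_one p0 p1 W δk hp0s hp1s hWs hδs
  have hμteq : (fun ω => t * μ1 ω + (1 - t) * μ0 ω) = μt := by
    funext ω; simp only [hμ1def, hμ0def, hμtdef, muSR, hκtdef, hδdef]; ring
  set μ' := mixμ μ0 μ1 t with hμ'def
  have hμ'0 : ∀ p, 0 ≤ μ' p := mixμ_nonneg hμ00 hμ10 ht0 ht1
  have hμ's : ∑ p, μ' p = 1 := mixμ_sum hμ0s hμ1s t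
  -- step (a) : transfer the four μt entropies to μ'
  have ha1 : entropy μt (fun ω => (ω.2.2.1, (ω.1, ω.2.1, ω.2.2.2.1)))
      = entropy μ' (fun p => (p.1.2.2.1, (p.1.1, p.1.2.1, p.1.2.2.2.1))) := by
    have h := entropy_mix_fst_eq μ0 μ1 t (fun ω => (ω.2.2.1, (ω.1, ω.2.1, ω.2.2.2.1)))
    rw [hμteq] at h
    exact h.symm
  have ha2 : entropy μt (fun ω => (ω.2.2.2.2, (ω.1, ω.2.1, ω.2.2.2.1)))
      = entropy μ' (fun p => (p.1.2.2.2.2, (p.1.1, p.1.2.1, p.1.2.2.2.1))) := by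
    have h := entropy_mix_fst_eq μ0 μ1 t (fun ω => (ω.2.2.2.2, (ω.1, ω.2.1, ω.2.2.2.1)))
    rw [hμteq] at h
    exact h.symm
  have ha3 : entropy μt (fun ω => (ω.2.2.1, ω.2.2.2.2, (ω.1, ω.2.1, ω.2.2.2.1)))
      = entropy μ' (fun p => (p.1.2.2.1, p.1.2.2.2.2, (p.1.1, p.1.2.1, p.1.2.2.2.1))) := by
    have h := entropy_mix_fst_eq μ0 μ1 t
      (fun ω => (ω.2.2.1, ω.2.2.2.2, (ω.1, ω.2.1, ω.2.2.2.1)))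
    rw [hμteq] at h
    exact h.symm
  have ha4 : entropy μt (fun ω => (ω.1, ω.2.1, ω.2.2.2.1))
      = entropy μ' (fun p => (p.1.1, p.1.2.1, p.1.2.2.2.1)) := by
    have h := entropy_mix_fst_eq μ0 μ1 t (fun ω => (ω.1, ω.2.1, ω.2.2.2.1))
    rw [hμteq] at h
    exact h.symm
  -- step (b)+(c) : adding the coin `B = p.2` can only increase the cond. MI
  have hbc : 0 ≤ entropy μ' (fun p => (p.1.2.2.1,
          ((p.1.2.2.2.2, (p.1.1, p.1.2.1, p.1.2.2.2.1)))))
        + entropy μ' (fun p => (p.2, (p.1.2.2.2.2, (p.1.1, p.1.2.1, p.1.2.2.2.1))))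
        - entropy μ' (fun p => (p.1.2.2.1, p.2, (p.1.2.2.2.2, (p.1.1, p.1.2.1, p.1.2.2.2.1))))
        - entropy μ' (fun p => (p.1.2.2.2.2, (p.1.1, p.1.2.1, p.1.2.2.2.1))) :=
    condMI_nonneg hμ'0 hμ's (fun p => p.1.2.2.1) (fun p => p.2)
      (fun p => (p.1.2.2.2.2, (p.1.1, p.1.2.1, p.1.2.2.2.1)))
  have hperm2 : entropy μ' (fun p => ((p.1.2.2.2.2, p.2), (p.1.1, p.1.2.1, p.1.2.2.2.1)))
      = entropy μ' (fun p => (p.2, (p.1.2.2.2.2, (p.1.1, p.1.2.1, p.1.2.2.2.1)))) :=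
    entropy_comp_inj μ' _ _ (fun q => ((q.2.1, q.1), q.2.2))
      (Function.LeftInverse.injective (g := fun p => (p.1.2, (p.1.1, p.2))) fun q => rfl)
      (fun p => rfl)
  have hperm3 : entropy μ'
        (fun p => (p.1.2.2.1, (p.1.2.2.2.2, p.2), (p.1.1, p.1.2.1, p.1.2.2.2.1)))
      = entropy μ'
        (fun p => (p.1.2.2.1, p.2, (p.1.2.2.2.2, (p.1.1, p.1.2.1, p.1.2.2.2.1)))) :=
    entropy_comp_inj μ' _ _ (fun q => (q.1, (q.2.2.1, q.2.1), q.2.2.2))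
      (Function.LeftInverse.injective
        (g := fun p => (p.1, (p.2.1.2, (p.2.1.1, p.2.2)))) fun q => rfl)
      (fun p => rfl)
  -- step (d) : mixture entropies with the coin visible
  have hd2p : entropy μ' (fun p => ((p.1.2.2.2.2, p.2), (p.1.1, p.1.2.1, p.1.2.2.2.1)))
      = entropy μ' (fun p => ((p.1.2.2.2.2, (p.1.1, p.1.2.1, p.1.2.2.2.1)), p.2)) :=
    entropy_comp_inj μ' _ _ (fun q => ((q.1.1, q.2), q.1.2))
      (Function.LeftInverse.injective (g := fun p => ((p.1.1, p.2), p.1.2)) fun q => rfl)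
      (fun p => rfl)
  have hd2 : entropy μ' (fun p => ((p.1.2.2.2.2, (p.1.1, p.1.2.1, p.1.2.2.2.1)), p.2))
      = t * entropy μ1 (fun ω => (ω.2.2.2.2, (ω.1, ω.2.1, ω.2.2.2.1)))
        + (1 - t) * entropy μ0 (fun ω => (ω.2.2.2.2, (ω.1, ω.2.1, ω.2.2.2.1)))
        + (Real.negMulLog t + Real.negMulLog (1 - t)) :=
    entropy_mix_pair hμ0s hμ1s t (fun ω => (ω.2.2.2.2, (ω.1, ω.2.1, ω.2.2.2.1)))
  have hd3p : entropy μ'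
        (fun p => (p.1.2.2.1, (p.1.2.2.2.2, p.2), (p.1.1, p.1.2.1, p.1.2.2.2.1)))
      = entropy μ'
        (fun p => ((p.1.2.2.1, p.1.2.2.2.2, (p.1.1, p.1.2.1, p.1.2.2.2.1)), p.2)) :=
    entropy_comp_inj μ' _ _ (fun q => (q.1.1, (q.1.2.1, q.2), q.1.2.2))
      (Function.LeftInverse.injective
        (g := fun p => ((p.1, (p.2.1.1, p.2.2)), p.2.1.2)) fun q => rfl)
      (fun p => rfl)
  have hd3 : entropy μ'
        (fun p => ((p.1.2.2.1, p.1.2.2.2.2, (p.1.1, p.1.2.1, p.1.2.2.2.1)), p.2))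
      = t * entropy μ1 (fun ω => (ω.2.2.1, ω.2.2.2.2, (ω.1, ω.2.1, ω.2.2.2.1)))
        + (1 - t) * entropy μ0 (fun ω => (ω.2.2.1, ω.2.2.2.2, (ω.1, ω.2.1, ω.2.2.2.1)))
        + (Real.negMulLog t + Real.negMulLog (1 - t)) :=
    entropy_mix_pair hμ0s hμ1s t
      (fun ω => (ω.2.2.1, ω.2.2.2.2, (ω.1, ω.2.1, ω.2.2.2.1)))
  -- step (e) : κ-independence of the base-measurable entropies
  have he1 : entropy μt (fun ω => (ω.2.2.1, (ω.1, ω.2.1, ω.2.2.2.1)))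
      = entropy μ1 (fun ω => (ω.2.2.1, (ω.1, ω.2.1, ω.2.2.2.1))) :=
    muSR_entropy_base_indep p0 p1 W κt κ hκts hκs
      (fun s => (s.2.2.1, (s.1, s.2.1, s.2.2.2)))
  have he4 : entropy μt (fun ω => (ω.1, ω.2.1, ω.2.2.2.1))
      = entropy μ1 (fun ω => (ω.1, ω.2.1, ω.2.2.2.1)) :=
    muSR_entropy_base_indep p0 p1 W κt κ hκts hκs (fun s => (s.1, s.2.1, s.2.2.2))
  have hf1 : entropy μ0 (fun ω => (ω.2.2.1, (ω.1, ω.2.1, ω.2.2.2.1)))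
      = entropy μ1 (fun ω => (ω.2.2.1, (ω.1, ω.2.1, ω.2.2.2.1))) :=
    muSR_entropy_base_indep p0 p1 W δk κ hδs hκs
      (fun s => (s.2.2.1, (s.1, s.2.1, s.2.2.2)))
  have hf4 : entropy μ0 (fun ω => (ω.1, ω.2.1, ω.2.2.2.1))
      = entropy μ1 (fun ω => (ω.1, ω.2.1, ω.2.2.2.1)) :=
    muSR_entropy_base_indep p0 p1 W δk κ hδs hκs (fun s => (s.1, s.2.1, s.2.2.2))
  -- step (f) : under μ0 the compressed output is a.s. constant
  have hf0 : ∀ ω : X0A × X1A × Y1A × Y2A × Yh1A, μ0 ω ≠ 0 → ω.2.2.2.2 = yh0 := by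
    intro ω h
    by_contra hne
    exact h (by simp [hμ0def, muSR, hδdef, hne])
  have hzero : entropy μ0 (fun ω => (ω.2.2.1, (ω.1, ω.2.1, ω.2.2.2.1)))
        + entropy μ0 (fun ω => (ω.2.2.2.2, (ω.1, ω.2.1, ω.2.2.2.1)))
        - entropy μ0 (fun ω => (ω.2.2.1, ω.2.2.2.2, (ω.1, ω.2.1, ω.2.2.2.1)))
        - entropy μ0 (fun ω => (ω.1, ω.2.1, ω.2.2.2.1)) = 0 :=
    condMI_eq_zero_of_ae_const μ0 (fun ω => ω.2.2.1) (fun ω => ω.2.2.2.2)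
      (fun ω => (ω.1, ω.2.1, ω.2.2.2.1)) yh0 hf0
  -- step (g) : nonnegativity of the μ1 conditional MI
  have hnonneg : 0 ≤ entropy μ1 (fun ω => (ω.2.2.1, (ω.1, ω.2.1, ω.2.2.2.1)))
        + entropy μ1 (fun ω => (ω.2.2.2.2, (ω.1, ω.2.1, ω.2.2.2.1)))
        - entropy μ1 (fun ω => (ω.2.2.1, ω.2.2.2.2, (ω.1, ω.2.1, ω.2.2.2.1)))
        - entropy μ1 (fun ω => (ω.1, ω.2.1, ω.2.2.2.1)) :=
    condMI_nonneg hμ10 hμ1s (fun ω => ω.2.2.1) (fun ω => ω.2.2.2.2)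
      (fun ω => (ω.1, ω.2.1, ω.2.2.2.1))
  have hmul : 0 ≤ (1 - t) * (entropy μ1 (fun ω => (ω.2.2.1, (ω.1, ω.2.1, ω.2.2.2.1)))
        + entropy μ1 (fun ω => (ω.2.2.2.2, (ω.1, ω.2.1, ω.2.2.2.1)))
        - entropy μ1 (fun ω => (ω.2.2.1, ω.2.2.2.2, (ω.1, ω.2.1, ω.2.2.2.1)))
        - entropy μ1 (fun ω => (ω.1, ω.2.1, ω.2.2.2.1))) :=
    mul_nonneg (by linarith) hnonneg
  have step3 : entropy μ0 (fun ω => (ω.2.2.2.2, (ω.1, ω.2.1, ω.2.2.2.1)))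
        - entropy μ0 (fun ω => (ω.2.2.1, ω.2.2.2.2, (ω.1, ω.2.1, ω.2.2.2.1)))
      = entropy μ1 (fun ω => (ω.1, ω.2.1, ω.2.2.2.1))
        - entropy μ1 (fun ω => (ω.2.2.1, (ω.1, ω.2.1, ω.2.2.2.1))) := by
    linarith [hzero, hf1, hf4]
  have hprod : (1 - t) * (entropy μ0 (fun ω => (ω.2.2.2.2, (ω.1, ω.2.1, ω.2.2.2.1)))
        - entropy μ0 (fun ω => (ω.2.2.1, ω.2.2.2.2, (ω.1, ω.2.1, ω.2.2.2.1))))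
      = (1 - t) * (entropy μ1 (fun ω => (ω.1, ω.2.1, ω.2.2.2.1))
        - entropy μ1 (fun ω => (ω.2.2.1, (ω.1, ω.2.1, ω.2.2.2.1)))) := by
    rw [step3]
  simp only [condMI]
  linarith [ha1, ha2, ha3, ha4, hbc, hperm2, hperm3, hd2p, hd2, hd3p, hd3, he1, he4,
    hf1, hf4, hzero, hnonneg, hmul, hprod]

end SRMix

section SRFinal
variable {X0A X1A Y1A Y2A Yh1A : Type}
  [Fintype X0A] [DecidableEq X0A] [Fintype X1A] [DecidableEq X1A]
  [Fintype Y1A] [DecidableEq Y1A] [Fintype Y2A] [DecidableEq Y2A]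
  [Fintype Yh1A] [DecidableEq Yh1A]
variable (p0 : X0A → ℝ) (p1 : X1A → ℝ) (W : X0A → X1A → Y1A × Y2A → ℝ)
  (κ κ' : Y1A → X1A → Yh1A → ℝ)

lemma srG_continuous (yh0 : Yh1A) :
    Continuous (fun t : ℝ => condMI (muSR p0 p1 W
        (fun y x yh => t * κ y x yh + (1 - t) * (if yh = yh0 then 1 else 0)))
      (fun ω => ω.2.2.1) (fun ω => ω.2.2.2.2) (fun ω => (ω.2.1, ω.2.2.2.1))) := by
  have hμc : ∀ ω : X0A × X1A × Y1A × Y2A × Yh1A, Continuous (fun t : ℝ =>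
      muSR p0 p1 W (fun y x yh => t * κ y x yh + (1 - t) * (if yh = yh0 then 1 else 0)) ω) := by
    intro ω
    unfold muSR
    fun_prop
  have hH : ∀ {α : Type} [Fintype α] [DecidableEq α] (V : X0A × X1A × Y1A × Y2A × Yh1A → α),
      Continuous (fun t : ℝ => entropy (muSR p0 p1 W
        (fun y x yh => t * κ y x yh + (1 - t) * (if yh = yh0 then 1 else 0))) V) := by
    intro α _ _ V
    unfold entropy
    apply continuous_finset_sum
    intro a _
    exact Real.continuous_negMulLog.comp (continuous_finset_sum _ fun ω _ => hμc ω)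
  unfold condMI
  exact (((hH _).add (hH _)).sub (hH _)).sub (hH _)

lemma srD_indep (hκs : ∀ y x, ∑ yh, κ y x yh = 1) (hκs' : ∀ y x, ∑ yh, κ' y x yh = 1) :
    condMI (muSR p0 p1 W κ) (fun ω => ω.1) (fun ω => ω.2.2.2.1) (fun ω => ω.2.1)
      = condMI (muSR p0 p1 W κ') (fun ω => ω.1) (fun ω => ω.2.2.2.1) (fun ω => ω.2.1) := by
  have e1 : entropy (muSR p0 p1 W κ) (fun ω => (ω.1, ω.2.1))
      = entropy (muSR p0 p1 W κ') (fun ω => (ω.1, ω.2.1)) :=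
    muSR_entropy_base_indep p0 p1 W κ κ' hκs hκs' (fun s => (s.1, s.2.1))
  have e2 : entropy (muSR p0 p1 W κ) (fun ω => (ω.2.2.2.1, ω.2.1))
      = entropy (muSR p0 p1 W κ') (fun ω => (ω.2.2.2.1, ω.2.1)) :=
    muSR_entropy_base_indep p0 p1 W κ κ' hκs hκs' (fun s => (s.2.2.2, s.2.1))
  have e3 : entropy (muSR p0 p1 W κ) (fun ω => (ω.1, ω.2.2.2.1, ω.2.1))
      = entropy (muSR p0 p1 W κ') (fun ω => (ω.1, ω.2.2.2.1, ω.2.1)) :=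
    muSR_entropy_base_indep p0 p1 W κ κ' hκs hκs' (fun s => (s.1, s.2.2.2, s.2.1))
  have e4 : entropy (muSR p0 p1 W κ) (fun ω => ω.2.1)
      = entropy (muSR p0 p1 W κ') (fun ω => ω.2.1) :=
    muSR_entropy_base_indep p0 p1 W κ κ' hκs hκs' (fun s => s.2.1)
  simp only [condMI]
  linarith [e1, e2, e3, e4]

lemma srC_indep (hκs : ∀ y x, ∑ yh, κ y x yh = 1) (hκs' : ∀ y x, ∑ yh, κ' y x yh = 1) :
    mutualInfo (muSR p0 p1 W κ) (fun ω => ω.2.1) (fun ω => ω.2.2.2.1)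
      = mutualInfo (muSR p0 p1 W κ') (fun ω => ω.2.1) (fun ω => ω.2.2.2.1) := by
  have e1 : entropy (muSR p0 p1 W κ) (fun ω => (ω.2.1, ()))
      = entropy (muSR p0 p1 W κ') (fun ω => (ω.2.1, ())) :=
    muSR_entropy_base_indep p0 p1 W κ κ' hκs hκs' (fun s => (s.2.1, ()))
  have e2 : entropy (muSR p0 p1 W κ) (fun ω => (ω.2.2.2.1, ()))
      = entropy (muSR p0 p1 W κ') (fun ω => (ω.2.2.2.1, ())) :=
    muSR_entropy_base_indep p0 p1 W κ κ' hκs hκs' (fun s => (s.2.2.2, ()))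
  have e3 : entropy (muSR p0 p1 W κ) (fun ω => (ω.2.1, ω.2.2.2.1, ()))
      = entropy (muSR p0 p1 W κ') (fun ω => (ω.2.1, ω.2.2.2.1, ())) :=
    muSR_entropy_base_indep p0 p1 W κ κ' hκs hκs' (fun s => (s.2.1, s.2.2.2, ()))
  have e4 : entropy (muSR p0 p1 W κ) (fun _ => ())
      = entropy (muSR p0 p1 W κ') (fun _ => ()) :=
    muSR_entropy_base_indep p0 p1 W κ κ' hκs hκs' (fun _ => ())
  simp only [mutualInfo, condMI]
  linarith [e1, e2, e3, e4]

lemma condMI_le_bound {Ω α β γ : Type*} [Fintype Ω]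
    [Fintype α] [DecidableEq α] [Fintype β] [DecidableEq β] [Fintype γ] [DecidableEq γ]
    {μ : Ω → ℝ} (hμ0 : ∀ ω, 0 ≤ μ ω) (hμ1 : ∑ ω, μ ω = 1)
    (X : Ω → α) (Y : Ω → β) (Z : Ω → γ) :
    condMI μ X Y Z ≤ (Fintype.card (α × γ) : ℝ) * (Real.exp 1)⁻¹
      + (Fintype.card (β × γ) : ℝ) * (Real.exp 1)⁻¹ := by
  have h3 := entropy_nonneg hμ0 hμ1 (fun ω => (X ω, Y ω, Z ω))
  have h4 := entropy_nonneg hμ0 hμ1 Z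
  have h1 := entropy_le_card hμ0 (fun ω => (X ω, Z ω))
  have h2 := entropy_le_card hμ0 (fun ω => (Y ω, Z ω))
  unfold condMI
  linarith

end SRFinal

/-- For the single-relay channel, the joint compression-message
decoding rate equals the successive compression-message decoding rate:
`sup_{p(x₀)p(x₁)p(ŷ₁|y₁,x₁)} [ I(X₀; Ŷ₁, Y₂ | X₁) − max{0, I(Y₁; Ŷ₁ | X₁, Y₂) − I(X₁; Y₂)} ]`
equals the supremum, over all such distributions additionally satisfying
`I(Y₁; Ŷ₁ | X₁, Y₂) ≤ I(X₁; Y₂)`, of `I(X₀; Ŷ₁, Y₂ | X₁)`. -/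
theorem single_relay_joint_eq_successive
    {X0A X1A Y1A Y2A Yh1A : Type}
    [Fintype X0A] [DecidableEq X0A] [Fintype X1A] [DecidableEq X1A]
    [Fintype Y1A] [DecidableEq Y1A] [Fintype Y2A] [DecidableEq Y2A]
    [Fintype Yh1A] [DecidableEq Yh1A]
    [Nonempty X0A] [Nonempty X1A] [Nonempty Y1A] [Nonempty Y2A] [Nonempty Yh1A]
    (W : X0A → X1A → Y1A × Y2A → ℝ)
    (hW : ∀ x0 x1 y, 0 ≤ W x0 x1 y) (hWs : ∀ x0 x1, ∑ y, W x0 x1 y = 1) :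
    sSup { r : ℝ | ∃ (p0 : X0A → ℝ) (p1 : X1A → ℝ) (κ : Y1A → X1A → Yh1A → ℝ),
        (∀ x, 0 ≤ p0 x) ∧ (∑ x, p0 x = 1) ∧
        (∀ x, 0 ≤ p1 x) ∧ (∑ x, p1 x = 1) ∧
        (∀ y x yh, 0 ≤ κ y x yh) ∧ (∀ y x, ∑ yh, κ y x yh = 1) ∧
        r = condMI (muSR p0 p1 W κ) (srX0 X0A X1A Y1A Y2A Yh1A)
              (fun ω => (srYh1 X0A X1A Y1A Y2A Yh1A ω, srY2 X0A X1A Y1A Y2A Yh1A ω))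
              (srX1 X0A X1A Y1A Y2A Yh1A)
            - max 0
              (condMI (muSR p0 p1 W κ) (srY1 X0A X1A Y1A Y2A Yh1A)
                  (srYh1 X0A X1A Y1A Y2A Yh1A)
                  (fun ω => (srX1 X0A X1A Y1A Y2A Yh1A ω, srY2 X0A X1A Y1A Y2A Yh1A ω))
                - mutualInfo (muSR p0 p1 W κ) (srX1 X0A X1A Y1A Y2A Yh1A)
                    (srY2 X0A X1A Y1A Y2A Yh1A)) } =
    sSup { r : ℝ | ∃ (p0 : X0A → ℝ) (p1 : X1A → ℝ) (κ : Y1A → X1A → Yh1A → ℝ),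
        (∀ x, 0 ≤ p0 x) ∧ (∑ x, p0 x = 1) ∧
        (∀ x, 0 ≤ p1 x) ∧ (∑ x, p1 x = 1) ∧
        (∀ y x yh, 0 ≤ κ y x yh) ∧ (∀ y x, ∑ yh, κ y x yh = 1) ∧
        condMI (muSR p0 p1 W κ) (srY1 X0A X1A Y1A Y2A Yh1A)
            (srYh1 X0A X1A Y1A Y2A Yh1A)
            (fun ω => (srX1 X0A X1A Y1A Y2A Yh1A ω, srY2 X0A X1A Y1A Y2A Yh1A ω))
          ≤ mutualInfo (muSR p0 p1 W κ) (srX1 X0A X1A Y1A Y2A Yh1A)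
              (srY2 X0A X1A Y1A Y2A Yh1A) ∧
        r = condMI (muSR p0 p1 W κ) (srX0 X0A X1A Y1A Y2A Yh1A)
              (fun ω => (srYh1 X0A X1A Y1A Y2A Yh1A ω, srY2 X0A X1A Y1A Y2A Yh1A ω))
              (srX1 X0A X1A Y1A Y2A Yh1A) } := by
  classical
  obtain ⟨yh0⟩ := (inferInstance : Nonempty Yh1A)
  set Bd : ℝ := (Fintype.card (X0A × X1A) : ℝ) * (Real.exp 1)⁻¹
    + (Fintype.card ((Yh1A × Y2A) × X1A) : ℝ) * (Real.exp 1)⁻¹ with hBddef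
  -- the two sets
  set S1 := { r : ℝ | ∃ (p0 : X0A → ℝ) (p1 : X1A → ℝ) (κ : Y1A → X1A → Yh1A → ℝ),
        (∀ x, 0 ≤ p0 x) ∧ (∑ x, p0 x = 1) ∧
        (∀ x, 0 ≤ p1 x) ∧ (∑ x, p1 x = 1) ∧
        (∀ y x yh, 0 ≤ κ y x yh) ∧ (∀ y x, ∑ yh, κ y x yh = 1) ∧
        r = condMI (muSR p0 p1 W κ) (srX0 X0A X1A Y1A Y2A Yh1A)
              (fun ω => (srYh1 X0A X1A Y1A Y2A Yh1A ω, srY2 X0A X1A Y1A Y2A Yh1A ω))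
              (srX1 X0A X1A Y1A Y2A Yh1A)
            - max 0
              (condMI (muSR p0 p1 W κ) (srY1 X0A X1A Y1A Y2A Yh1A)
                  (srYh1 X0A X1A Y1A Y2A Yh1A)
                  (fun ω => (srX1 X0A X1A Y1A Y2A Yh1A ω, srY2 X0A X1A Y1A Y2A Yh1A ω))
                - mutualInfo (muSR p0 p1 W κ) (srX1 X0A X1A Y1A Y2A Yh1A)
                    (srY2 X0A X1A Y1A Y2A Yh1A)) } with hS1def
  set S2 := { r : ℝ | ∃ (p0 : X0A → ℝ) (p1 : X1A → ℝ) (κ : Y1A → X1A → Yh1A → ℝ),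
        (∀ x, 0 ≤ p0 x) ∧ (∑ x, p0 x = 1) ∧
        (∀ x, 0 ≤ p1 x) ∧ (∑ x, p1 x = 1) ∧
        (∀ y x yh, 0 ≤ κ y x yh) ∧ (∀ y x, ∑ yh, κ y x yh = 1) ∧
        condMI (muSR p0 p1 W κ) (srY1 X0A X1A Y1A Y2A Yh1A)
            (srYh1 X0A X1A Y1A Y2A Yh1A)
            (fun ω => (srX1 X0A X1A Y1A Y2A Yh1A ω, srY2 X0A X1A Y1A Y2A Yh1A ω))
          ≤ mutualInfo (muSR p0 p1 W κ) (srX1 X0A X1A Y1A Y2A Yh1A)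
              (srY2 X0A X1A Y1A Y2A Yh1A) ∧
        r = condMI (muSR p0 p1 W κ) (srX0 X0A X1A Y1A Y2A Yh1A)
              (fun ω => (srYh1 X0A X1A Y1A Y2A Yh1A ω, srY2 X0A X1A Y1A Y2A Yh1A ω))
              (srX1 X0A X1A Y1A Y2A Yh1A) } with hS2def
  -- bounds
  have hBdd1 : BddAbove S1 := by
    refine ⟨Bd, fun r hr => ?_⟩
    obtain ⟨p0, p1, κ, hp00, hp0s, hp10, hp1s, hκ0, hκs, hreq⟩ := hr
    have hμ0 : ∀ ω, 0 ≤ muSR p0 p1 W κ ω := muSR_nonneg p0 p1 W κ hp00 hp10 hW hκ0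
    have hμs : ∑ ω, muSR p0 p1 W κ ω = 1 := muSR_sum_one p0 p1 W κ hp0s hp1s hWs hκs
    have hb := condMI_le_bound hμ0 hμs (srX0 X0A X1A Y1A Y2A Yh1A)
      (fun ω => (srYh1 X0A X1A Y1A Y2A Yh1A ω, srY2 X0A X1A Y1A Y2A Yh1A ω))
      (srX1 X0A X1A Y1A Y2A Yh1A)
    have hmax := le_max_left (0:ℝ)
      (condMI (muSR p0 p1 W κ) (srY1 X0A X1A Y1A Y2A Yh1A)
          (srYh1 X0A X1A Y1A Y2A Yh1A)
          (fun ω => (srX1 X0A X1A Y1A Y2A Yh1A ω, srY2 X0A X1A Y1A Y2A Yh1A ω))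
        - mutualInfo (muSR p0 p1 W κ) (srX1 X0A X1A Y1A Y2A Yh1A)
            (srY2 X0A X1A Y1A Y2A Yh1A))
    rw [hreq, hBddef]
    linarith
  have hBdd2 : BddAbove S2 := by
    refine ⟨Bd, fun r hr => ?_⟩
    obtain ⟨p0, p1, κ, hp00, hp0s, hp10, hp1s, hκ0, hκs, hcon, hreq⟩ := hr
    have hμ0 : ∀ ω, 0 ≤ muSR p0 p1 W κ ω := muSR_nonneg p0 p1 W κ hp00 hp10 hW hκ0
    have hμs : ∑ ω, muSR p0 p1 W κ ω = 1 := muSR_sum_one p0 p1 W κ hp0s hp1s hWs hκs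
    have hb := condMI_le_bound hμ0 hμs (srX0 X0A X1A Y1A Y2A Yh1A)
      (fun ω => (srYh1 X0A X1A Y1A Y2A Yh1A ω, srY2 X0A X1A Y1A Y2A Yh1A ω))
      (srX1 X0A X1A Y1A Y2A Yh1A)
    rw [hreq, hBddef]
    linarith
  -- the canonical witness
  set u0 : X0A → ℝ := fun _ => (Fintype.card X0A : ℝ)⁻¹ with hu0def
  set u1 : X1A → ℝ := fun _ => (Fintype.card X1A : ℝ)⁻¹ with hu1def
  set δk : Y1A → X1A → Yh1A → ℝ := fun _ _ yh => if yh = yh0 then 1 else 0 with hδdef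
  have hu00 : ∀ x, 0 ≤ u0 x := fun x => by rw [hu0def]; positivity
  have hu0s : ∑ x, u0 x = 1 := by
    rw [hu0def, Finset.sum_const, Finset.card_univ, nsmul_eq_mul]
    rw [mul_inv_cancel₀]
    exact Nat.cast_ne_zero.mpr Fintype.card_ne_zero
  have hu10 : ∀ x, 0 ≤ u1 x := fun x => by rw [hu1def]; positivity
  have hu1s : ∑ x, u1 x = 1 := by
    rw [hu1def, Finset.sum_const, Finset.card_univ, nsmul_eq_mul]
    rw [mul_inv_cancel₀]
    exact Nat.cast_ne_zero.mpr Fintype.card_ne_zero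
  have hδ0 : ∀ y x yh, 0 ≤ δk y x yh := by
    intro y x yh; rw [hδdef]; dsimp only; split <;> norm_num
  have hδs : ∀ y x, ∑ yh, δk y x yh = 1 := by
    intro y x; rw [hδdef]; simp [Finset.sum_ite_eq']
  have hμδ0 : ∀ ω, 0 ≤ muSR u0 u1 W δk ω := muSR_nonneg u0 u1 W δk hu00 hu10 hW hδ0
  have hμδs : ∑ ω, muSR u0 u1 W δk ω = 1 := muSR_sum_one u0 u1 W δk hu0s hu1s hWs hδs
  have hδae : ∀ ω : X0A × X1A × Y1A × Y2A × Yh1A,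
      muSR u0 u1 W δk ω ≠ 0 → ω.2.2.2.2 = yh0 := by
    intro ω h
    by_contra hne
    exact h (by simp [muSR, hδdef, hne])
  have hGδ : condMI (muSR u0 u1 W δk) (srY1 X0A X1A Y1A Y2A Yh1A)
        (srYh1 X0A X1A Y1A Y2A Yh1A)
        (fun ω => (srX1 X0A X1A Y1A Y2A Yh1A ω, srY2 X0A X1A Y1A Y2A Yh1A ω)) = 0 :=
    condMI_eq_zero_of_ae_const _ _ _ _ yh0 hδae
  have hCδ : 0 ≤ mutualInfo (muSR u0 u1 W δk) (srX1 X0A X1A Y1A Y2A Yh1A)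
        (srY2 X0A X1A Y1A Y2A Yh1A) :=
    condMI_nonneg hμδ0 hμδs _ _ _
  have hmem2 : (condMI (muSR u0 u1 W δk) (srX0 X0A X1A Y1A Y2A Yh1A)
        (fun ω => (srYh1 X0A X1A Y1A Y2A Yh1A ω, srY2 X0A X1A Y1A Y2A Yh1A ω))
        (srX1 X0A X1A Y1A Y2A Yh1A)) ∈ S2 :=
    ⟨u0, u1, δk, hu00, hu0s, hu10, hu1s, hδ0, hδs, by rw [hGδ]; exact hCδ, rfl⟩
  have hne2 : S2.Nonempty := ⟨_, hmem2⟩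
  have hne1 : S1.Nonempty := by
    refine ⟨_, u0, u1, δk, hu00, hu0s, hu10, hu1s, hδ0, hδs, rfl⟩
  apply le_antisymm
  · -- sSup S1 ≤ sSup S2
    apply csSup_le hne1
    intro r hr
    obtain ⟨p0, p1, κ, hp00, hp0s, hp10, hp1s, hκ0, hκs, hreq⟩ := hr
    by_cases hGC : condMI (muSR p0 p1 W κ) (srY1 X0A X1A Y1A Y2A Yh1A)
          (srYh1 X0A X1A Y1A Y2A Yh1A)
          (fun ω => (srX1 X0A X1A Y1A Y2A Yh1A ω, srY2 X0A X1A Y1A Y2A Yh1A ω))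
        ≤ mutualInfo (muSR p0 p1 W κ) (srX1 X0A X1A Y1A Y2A Yh1A)
            (srY2 X0A X1A Y1A Y2A Yh1A)
    · have hmax : max 0 (condMI (muSR p0 p1 W κ) (srY1 X0A X1A Y1A Y2A Yh1A)
            (srYh1 X0A X1A Y1A Y2A Yh1A)
            (fun ω => (srX1 X0A X1A Y1A Y2A Yh1A ω, srY2 X0A X1A Y1A Y2A Yh1A ω))
          - mutualInfo (muSR p0 p1 W κ) (srX1 X0A X1A Y1A Y2A Yh1A)
              (srY2 X0A X1A Y1A Y2A Yh1A)) = 0 :=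
        max_eq_left (sub_nonpos.mpr hGC)
      have hr2 : r = condMI (muSR p0 p1 W κ) (srX0 X0A X1A Y1A Y2A Yh1A)
          (fun ω => (srYh1 X0A X1A Y1A Y2A Yh1A ω, srY2 X0A X1A Y1A Y2A Yh1A ω))
          (srX1 X0A X1A Y1A Y2A Yh1A) := by
        rw [hreq, hmax, sub_zero]
      exact le_csSup hBdd2 ⟨p0, p1, κ, hp00, hp0s, hp10, hp1s, hκ0, hκs, hGC, hr2⟩
    · push_neg at hGC
      have hμ0' : ∀ ω, 0 ≤ muSR p0 p1 W κ ω := muSR_nonneg p0 p1 W κ hp00 hp10 hW hκ0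
      have hμs' : ∑ ω, muSR p0 p1 W κ ω = 1 := muSR_sum_one p0 p1 W κ hp0s hp1s hWs hκs
      have hC0 : 0 ≤ mutualInfo (muSR p0 p1 W κ) (srX1 X0A X1A Y1A Y2A Yh1A)
          (srY2 X0A X1A Y1A Y2A Yh1A) := condMI_nonneg hμ0' hμs' _ _ _
      set gf : ℝ → ℝ := fun t => condMI (muSR p0 p1 W
          (fun y x yh => t * κ y x yh + (1 - t) * (if yh = yh0 then 1 else 0)))
        (fun ω => ω.2.2.1) (fun ω => ω.2.2.2.2) (fun ω => (ω.2.1, ω.2.2.2.1)) with hgfdef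
      have hcont : Continuous gf := srG_continuous p0 p1 W κ yh0
      have hsub := intermediate_value_Icc (zero_le_one) hcont.continuousOn
      have hae0 : ∀ ω : X0A × X1A × Y1A × Y2A × Yh1A,
          muSR p0 p1 W (fun y x yh => (0:ℝ) * κ y x yh
            + (1 - 0) * (if yh = yh0 then 1 else 0)) ω ≠ 0 → ω.2.2.2.2 = yh0 := by
        intro ω h
        by_contra hne
        exact h (by simp [muSR, hne])
      have e0 : gf 0 = 0 := condMI_eq_zero_of_ae_const _ _ _ _ yh0 hae0
      have e1 : gf 1 = condMI (muSR p0 p1 W κ) (srY1 X0A X1A Y1A Y2A Yh1A)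
          (srYh1 X0A X1A Y1A Y2A Yh1A)
          (fun ω => (srX1 X0A X1A Y1A Y2A Yh1A ω, srY2 X0A X1A Y1A Y2A Yh1A ω)) := by
        have hk : muSR p0 p1 W (fun y x yh => (1:ℝ) * κ y x yh
            + (1 - 1) * (if yh = yh0 then 1 else 0)) = muSR p0 p1 W κ :=
          funext fun ω => by simp only [muSR]; ring
        show condMI (muSR p0 p1 W (fun y x yh => (1:ℝ) * κ y x yh
            + (1 - 1) * (if yh = yh0 then 1 else 0)))
          (fun ω => ω.2.2.1) (fun ω => ω.2.2.2.2) (fun ω => (ω.2.1, ω.2.2.2.1)) = _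
        rw [hk]
        rfl
      have hmemIcc : mutualInfo (muSR p0 p1 W κ) (srX1 X0A X1A Y1A Y2A Yh1A)
          (srY2 X0A X1A Y1A Y2A Yh1A) ∈ Set.Icc (gf 0) (gf 1) := by
        rw [Set.mem_Icc, e0, e1]
        exact ⟨hC0, hGC.le⟩
      obtain ⟨t0, ht0Icc, hgt0⟩ := hsub hmemIcc
      rw [Set.mem_Icc] at ht0Icc
      set κs : Y1A → X1A → Yh1A → ℝ :=
        fun y x yh => t0 * κ y x yh + (1 - t0) * (if yh = yh0 then 1 else 0) with hκsdef
      have hκs0 : ∀ y x yh, 0 ≤ κs y x yh := by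
        intro y x yh
        have h2 : 0 ≤ t0 * κ y x yh := mul_nonneg ht0Icc.1 (hκ0 y x yh)
        rw [hκsdef]
        dsimp only
        by_cases h : yh = yh0
        · subst h; simp; linarith [ht0Icc.2]
        · simp [h]; linarith
      have hκss : ∀ y x, ∑ yh, κs y x yh = 1 := by
        intro y x
        rw [hκsdef]
        dsimp only
        rw [Finset.sum_add_distrib, ← Finset.mul_sum, ← Finset.mul_sum, hκs y x]
        simp [Finset.sum_ite_eq']
      -- chain of (in)equalities
      have hGκs : condMI (muSR p0 p1 W κs) (srY1 X0A X1A Y1A Y2A Yh1A)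
          (srYh1 X0A X1A Y1A Y2A Yh1A)
          (fun ω => (srX1 X0A X1A Y1A Y2A Yh1A ω, srY2 X0A X1A Y1A Y2A Yh1A ω))
          = mutualInfo (muSR p0 p1 W κ) (srX1 X0A X1A Y1A Y2A Yh1A)
              (srY2 X0A X1A Y1A Y2A Yh1A) := hgt0
      have hCeq : mutualInfo (muSR p0 p1 W κs) (srX1 X0A X1A Y1A Y2A Yh1A)
            (srY2 X0A X1A Y1A Y2A Yh1A)
          = mutualInfo (muSR p0 p1 W κ) (srX1 X0A X1A Y1A Y2A Yh1A)
              (srY2 X0A X1A Y1A Y2A Yh1A) :=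
        srC_indep p0 p1 W κs κ hκss hκs
      have hidκ : condMI (muSR p0 p1 W κ) (srX0 X0A X1A Y1A Y2A Yh1A)
            (fun ω => (srYh1 X0A X1A Y1A Y2A Yh1A ω, srY2 X0A X1A Y1A Y2A Yh1A ω))
            (srX1 X0A X1A Y1A Y2A Yh1A)
          - condMI (muSR p0 p1 W κ) (srY1 X0A X1A Y1A Y2A Yh1A)
              (srYh1 X0A X1A Y1A Y2A Yh1A)
              (fun ω => (srX1 X0A X1A Y1A Y2A Yh1A ω, srY2 X0A X1A Y1A Y2A Yh1A ω))
          = condMI (muSR p0 p1 W κ) (fun ω => ω.1) (fun ω => ω.2.2.2.1) (fun ω => ω.2.1)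
          - condMI (muSR p0 p1 W κ) (fun ω => ω.2.2.1) (fun ω => ω.2.2.2.2)
              (fun ω => (ω.1, ω.2.1, ω.2.2.2.1)) :=
        srAG_identity p0 p1 W κ hκs
      have hidκs : condMI (muSR p0 p1 W κs) (srX0 X0A X1A Y1A Y2A Yh1A)
            (fun ω => (srYh1 X0A X1A Y1A Y2A Yh1A ω, srY2 X0A X1A Y1A Y2A Yh1A ω))
            (srX1 X0A X1A Y1A Y2A Yh1A)
          - condMI (muSR p0 p1 W κs) (srY1 X0A X1A Y1A Y2A Yh1A)
              (srYh1 X0A X1A Y1A Y2A Yh1A)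
              (fun ω => (srX1 X0A X1A Y1A Y2A Yh1A ω, srY2 X0A X1A Y1A Y2A Yh1A ω))
          = condMI (muSR p0 p1 W κs) (fun ω => ω.1) (fun ω => ω.2.2.2.1) (fun ω => ω.2.1)
          - condMI (muSR p0 p1 W κs) (fun ω => ω.2.2.1) (fun ω => ω.2.2.2.2)
              (fun ω => (ω.1, ω.2.1, ω.2.2.2.1)) :=
        srAG_identity p0 p1 W κs hκss
      have hDeq : condMI (muSR p0 p1 W κs) (fun ω => ω.1) (fun ω => ω.2.2.2.1)
            (fun ω => ω.2.1)
          = condMI (muSR p0 p1 W κ) (fun ω => ω.1) (fun ω => ω.2.2.2.1)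
            (fun ω => ω.2.1) :=
        srD_indep p0 p1 W κs κ hκss hκs
      have hmix : condMI (muSR p0 p1 W κs) (fun ω => ω.2.2.1) (fun ω => ω.2.2.2.2)
            (fun ω => (ω.1, ω.2.1, ω.2.2.2.1))
          ≤ condMI (muSR p0 p1 W κ) (fun ω => ω.2.2.1) (fun ω => ω.2.2.2.2)
            (fun ω => (ω.1, ω.2.1, ω.2.2.2.1)) :=
        srh_mix p0 p1 W κ hp00 hp0s hp10 hp1s hW hWs hκ0 hκs yh0 ht0Icc.1 ht0Icc.2
      have hmem : (condMI (muSR p0 p1 W κs) (srX0 X0A X1A Y1A Y2A Yh1A)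
            (fun ω => (srYh1 X0A X1A Y1A Y2A Yh1A ω, srY2 X0A X1A Y1A Y2A Yh1A ω))
            (srX1 X0A X1A Y1A Y2A Yh1A)) ∈ S2 :=
        ⟨p0, p1, κs, hp00, hp0s, hp10, hp1s, hκs0, hκss,
          le_of_eq (hGκs.trans hCeq.symm), rfl⟩
      have hle : r ≤ condMI (muSR p0 p1 W κs) (srX0 X0A X1A Y1A Y2A Yh1A)
            (fun ω => (srYh1 X0A X1A Y1A Y2A Yh1A ω, srY2 X0A X1A Y1A Y2A Yh1A ω))
            (srX1 X0A X1A Y1A Y2A Yh1A) := by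
        rw [hreq, max_eq_right (sub_nonneg.mpr hGC.le)]
        linarith [hidκ, hidκs, hDeq, hmix, hGκs, hCeq]
      exact le_trans hle (le_csSup hBdd2 hmem)
  · -- sSup S2 ≤ sSup S1
    apply csSup_le hne2
    intro r hr
    obtain ⟨p0, p1, κ, hp00, hp0s, hp10, hp1s, hκ0, hκs, hcon, hreq⟩ := hr
    apply le_csSup hBdd1
    refine ⟨p0, p1, κ, hp00, hp0s, hp10, hp1s, hκ0, hκs, ?_⟩
    rw [hreq, max_eq_left (sub_nonpos.mpr hcon), sub_zero]
end
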